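/- arXiv:1108.4092 — 8 statements merged into one kernel-verified Lean document; each statement's English description precedes it below -/
import Mathlib

section
/- Let Γ = (V,E) be an infinite connected simple graph with path metric d, let s be a natural number such that ρ(v) ≤ s for all v ∈ V, let (aₙ)ₙ∈ℕ be an arrow in Γ, and let A = {aₙ : n ∈ ℕ}. Then the following statements are equivalent: (i) Γ is an asymptotic ray; (ii) there exists a natural number r such that V = B(A,r); (iii) there exists a natural number α such that for every n ∈ ℕ there is a vertex x with S(a₀,n) ⊆ B(x,α) (the family {S(a₀,n) : n ∈ ℕ} is uniformly bounded). -/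
section AuxLemmas

variable {V : Type*} {G : SimpleGraph V}

/-- If `d(x,v) = n+1` there is a vertex `u` adjacent to `v` with `d(x,u) ≤ n`. -/
lemma exists_adj_of_dist_succ (hG : G.Connected) {x v : V} {n : ℕ}
    (h : G.dist x v = n + 1) : ∃ u, G.dist x u ≤ n ∧ G.Adj u v := by
  obtain ⟨p, hp⟩ := hG.exists_walk_length_eq_dist x v
  rw [h] at hp
  refine ⟨p.getVert n, ?_, ?_⟩
  · have hnil : ¬ p.reverse.Nil := by
      rw [SimpleGraph.Walk.not_nil_iff_lt_length, SimpleGraph.Walk.length_reverse, hp]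
      omega
    have h1 : p.reverse.tail.length + 1 = p.reverse.length :=
      SimpleGraph.Walk.length_tail_add_one hnil
    have h2 : p.reverse.getVert 1 = p.getVert n := by
      rw [SimpleGraph.Walk.getVert_reverse]
      congr 1
      omega
    have hlen : p.reverse.tail.length = n := by
      rw [SimpleGraph.Walk.length_reverse, hp] at h1; omega
    have hd := SimpleGraph.dist_le p.reverse.tail
    rw [hlen] at hd
    calc G.dist x (p.getVert n) = G.dist (p.reverse.getVert 1) x := by
          rw [h2, SimpleGraph.dist_comm]
      _ ≤ n := hd
  · have hadj := p.adj_getVert_succ (i := n) (by omega)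
    rwa [SimpleGraph.Walk.getVert_of_length_le p (by omega : p.length ≤ n + 1)] at hadj

/-- Balls in a connected graph of max degree `s` are contained in finsets of
cardinality at most `(s+1)^n`. -/
lemma ball_finset (hG : G.Connected) {s : ℕ}
    (hdeg : ∀ v : V, (G.neighborSet v).encard ≤ (s : ℕ∞)) (x : V) (n : ℕ) :
    ∃ F : Finset V, (∀ v, G.dist x v ≤ n → v ∈ F) ∧ F.card ≤ (s + 1) ^ n := by
  classical
  induction n with
  | zero =>
    refine ⟨{x}, fun v hv => ?_, by simp⟩
    have : G.dist x v = 0 := by omega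
    have := (hG.dist_eq_zero_iff).mp this
    simp [this.symm]
  | succ n ih =>
    obtain ⟨F, hF1, hF2⟩ := ih
    have hfin : ∀ u : V, (G.neighborSet u).Finite := fun u =>
      Set.finite_of_encard_le_coe (hdeg u)
    refine ⟨F.biUnion (fun u => insert u (hfin u).toFinset), fun v hv => ?_, ?_⟩
    · rcases le_or_gt (G.dist x v) n with hle | hlt
      · exact Finset.mem_biUnion.mpr ⟨v, hF1 v hle, Finset.mem_insert_self _ _⟩
      · have heq : G.dist x v = n + 1 := by omega
        obtain ⟨u, hu1, hu2⟩ := exists_adj_of_dist_succ hG heq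
        refine Finset.mem_biUnion.mpr ⟨u, hF1 u hu1, Finset.mem_insert_of_mem ?_⟩
        rw [Set.Finite.mem_toFinset]
        exact hu2
    · calc (F.biUnion (fun u => insert u (hfin u).toFinset)).card
          ≤ F.card * (s + 1) := by
            refine Finset.card_biUnion_le_card_mul _ _ _ (fun u _ => ?_)
            have hcard : (hfin u).toFinset.card ≤ s := by
              have h1 := (hfin u).encard_eq_coe_toFinset_card
              have h2 := hdeg u
              rw [h1] at h2
              exact_mod_cast h2
            calc (insert u (hfin u).toFinset).card ≤ (hfin u).toFinset.card + 1 :=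
                  Finset.card_insert_le _ _
              _ ≤ s + 1 := by omega
      _ ≤ (s + 1) ^ n * (s + 1) := Nat.mul_le_mul_right _ hF2
      _ = (s + 1) ^ (n + 1) := by ring

end AuxLemmas

/-- `a` is an arrow in `G`: an injective sequence of vertices with consecutive terms
adjacent and `d(a 0, a n) = n` for all `n`. -/
def IsArrow {V : Type*} (G : SimpleGraph V) (a : ℕ → V) : Prop :=
  Function.Injective a ∧ ∀ n : ℕ, G.Adj (a n) (a (n + 1)) ∧ G.dist (a 0) (a n) = n

/-- `G` is an asymptotic ray: there is a bijection `f : V → ℕ` and naturals `m, m'` with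
`|f u - f v| ≤ m * d(u,v)` and `d(f⁻¹ i, f⁻¹ j) ≤ m' * |i - j|`. -/
def IsAsymptoticRay {V : Type*} (G : SimpleGraph V) : Prop :=
  ∃ f : V ≃ ℕ, ∃ m m' : ℕ,
    (∀ u v : V, Nat.dist (f u) (f v) ≤ m * G.dist u v) ∧
    (∀ i j : ℕ, G.dist (f.symm i) (f.symm j) ≤ m' * Nat.dist i j)

section ArrowAux

variable {V : Type*} {G : SimpleGraph V}

/-- Along an arrow, `d(a j, a (j+t)) ≤ t`. -/
lemma arrow_dist_le (hG : G.Connected) {a : ℕ → V} (ha : IsArrow G a) (j t : ℕ) :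
    G.dist (a j) (a (j + t)) ≤ t := by
  induction t with
  | zero => simp [SimpleGraph.dist_self]
  | succ t ih =>
    have hadj : G.dist (a (j + t)) (a (j + t + 1)) ≤ 1 := by
      have := SimpleGraph.dist_le (SimpleGraph.Walk.cons (ha.2 (j + t)).1 SimpleGraph.Walk.nil)
      simpa using this
    calc G.dist (a j) (a (j + (t + 1)))
        ≤ G.dist (a j) (a (j + t)) + G.dist (a (j + t)) (a (j + t + 1)) := by
          have := hG.dist_triangle (u := a j) (v := a (j + t)) (w := a (j + t + 1))
          simpa [← add_assoc] using this
      _ ≤ t + 1 := by omega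

lemma arrow_dist_le' (hG : G.Connected) {a : ℕ → V} (ha : IsArrow G a) (j k : ℕ) :
    G.dist (a j) (a k) ≤ Nat.dist j k := by
  rcases le_total j k with h | h
  · have := arrow_dist_le hG ha j (k - j)
    rw [Nat.add_sub_cancel' h] at this
    rwa [Nat.dist_eq_sub_of_le h]
  · have := arrow_dist_le hG ha k (j - k)
    rw [Nat.add_sub_cancel' h] at this
    rw [Nat.dist_eq_sub_of_le_right h, SimpleGraph.dist_comm]
    exact this

end ArrowAux

/-- For an infinite connected graph `G` with all degrees at most `s` and an
arrow `(aₙ)`, TFAE: (i) `G` is an asymptotic ray; (ii) `V = B(A, r)` for some `r`, where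
`A = {aₙ : n ∈ ℕ}`; (iii) the family of spheres `{S(a₀, n) : n ∈ ℕ}` is uniformly
bounded. -/
theorem asymptoticRay_tfae {V : Type*} [Infinite V] (G : SimpleGraph V)
    (hG : G.Connected) (s : ℕ) (hdeg : ∀ v : V, (G.neighborSet v).encard ≤ (s : ℕ∞))
    (a : ℕ → V) (ha : IsArrow G a) :
    [IsAsymptoticRay G,
     (∃ r : ℕ, ∀ v : V, ∃ n : ℕ, G.dist v (a n) ≤ r),
     (∃ α : ℕ, ∀ n : ℕ, ∃ x : V, ∀ u : V, G.dist u (a 0) = n → G.dist u x ≤ α)].TFAE := by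
  classical
  tfae_have 1 → 2 := by
    rintro ⟨f, m, m', h1, h2⟩
    set b : ℕ → ℕ := fun k => f (a k) with hb
    have hsymm : ∀ k, f.symm (b k) = a k := fun k => f.symm_apply_apply (a k)
    have hbstep : ∀ k, b (k + 1) ≤ b k + m := by
      intro k
      have hd := h1 (a k) (a (k + 1))
      have hle : G.dist (a k) (a (k + 1)) ≤ 1 := by
        have := arrow_dist_le hG ha k 1
        simpa using this
      have : Nat.dist (b k) (b (k + 1)) ≤ m := by
        calc Nat.dist (b k) (b (k + 1)) ≤ m * G.dist (a k) (a (k + 1)) := hd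
          _ ≤ m * 1 := Nat.mul_le_mul_left _ hle
          _ = m := by ring
      simp only [Nat.dist] at this
      omega
    have hunb : ∀ i : ℕ, ∃ k, i ≤ b k := by
      intro i
      refine ⟨m' * (b 0 + i) + 1, ?_⟩
      have hd := h2 (b 0) (b (m' * (b 0 + i) + 1))
      rw [hsymm, hsymm] at hd
      have hda : G.dist (a 0) (a (m' * (b 0 + i) + 1)) = m' * (b 0 + i) + 1 := (ha.2 _).2
      rw [hda] at hd
      have hlt : m' * (b 0 + i) < m' * Nat.dist (b 0) (b (m' * (b 0 + i) + 1)) := by omega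
      have := Nat.lt_of_mul_lt_mul_left hlt
      simp only [Nat.dist] at this
      omega
    refine ⟨m' * (m + b 0), fun v => ?_⟩
    by_cases hib : f v ≤ b 0
    · refine ⟨0, ?_⟩
      have hd := h2 (f v) (b 0)
      rw [hsymm, f.symm_apply_apply] at hd
      calc G.dist v (a 0) ≤ m' * Nat.dist (f v) (b 0) := hd
        _ ≤ m' * (m + b 0) := by
            refine Nat.mul_le_mul_left _ ?_
            simp only [Nat.dist]
            omega
    · push_neg at hib
      have hex : ∃ k, f v ≤ b k := hunb (f v)
      set k := Nat.find hex with hkdef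
      have hk : f v ≤ b k := Nat.find_spec hex
      have hk0 : k ≠ 0 := by
        intro h0
        rw [h0] at hk
        omega
      have hpred : ¬ f v ≤ b (k - 1) := Nat.find_min hex (by omega)
      push_neg at hpred
      have hstep := hbstep (k - 1)
      rw [(by omega : k - 1 + 1 = k)] at hstep
      refine ⟨k, ?_⟩
      have hd := h2 (f v) (b k)
      rw [hsymm, f.symm_apply_apply] at hd
      calc G.dist v (a k) ≤ m' * Nat.dist (f v) (b k) := hd
        _ ≤ m' * (m + b 0) := by
            refine Nat.mul_le_mul_left _ ?_
            simp only [Nat.dist]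
            omega
  tfae_have 2 → 3 := by
    rintro ⟨r, hr⟩
    refine ⟨2 * r, fun n => ⟨a n, fun u hu => ?_⟩⟩
    obtain ⟨k, hk⟩ := hr u
    have hk0 : G.dist (a 0) (a k) = k := (ha.2 k).2
    have hn : G.dist (a 0) u = n := by rwa [SimpleGraph.dist_comm]
    have h1 : k ≤ n + r := by
      calc k = G.dist (a 0) (a k) := hk0.symm
        _ ≤ G.dist (a 0) u + G.dist u (a k) := hG.dist_triangle
        _ ≤ n + r := by omega
    have h2 : n ≤ k + r := by
      calc n = G.dist (a 0) u := hn.symm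
        _ ≤ G.dist (a 0) (a k) + G.dist (a k) u := hG.dist_triangle
        _ = k + G.dist u (a k) := by rw [hk0, SimpleGraph.dist_comm]
        _ ≤ k + r := by omega
    have h3 : G.dist (a k) (a n) ≤ Nat.dist k n := arrow_dist_le' hG ha k n
    calc G.dist u (a n) ≤ G.dist u (a k) + G.dist (a k) (a n) := hG.dist_triangle
      _ ≤ r + Nat.dist k n := by omega
      _ ≤ 2 * r := by
          simp only [Nat.dist]
          omega
  tfae_have 3 → 1 := by
    classical
    rintro ⟨α, hα⟩
    -- every vertex is within 2α of the arrow vertex of its own layer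
    have hnear : ∀ v : V, G.dist v (a (G.dist (a 0) v)) ≤ 2 * α := by
      intro v
      obtain ⟨x, hx⟩ := hα (G.dist (a 0) v)
      have h1 : G.dist v x ≤ α := hx v (by rw [SimpleGraph.dist_comm])
      have h2 : G.dist (a (G.dist (a 0) v)) x ≤ α :=
        hx _ (by rw [SimpleGraph.dist_comm]; exact (ha.2 _).2)
      calc G.dist v (a (G.dist (a 0) v))
          ≤ G.dist v x + G.dist x (a (G.dist (a 0) v)) := hG.dist_triangle
        _ ≤ 2 * α := by
            rw [SimpleGraph.dist_comm] at h2
            omega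
    -- finsets covering the layers
    choose Fb hFb1 hFb2 using fun k => ball_finset hG hdeg (a k) (2 * α)
    set N : ℕ := (s + 1) ^ (2 * α) with hN
    have hmemFb : ∀ v : V, v ∈ Fb (G.dist (a 0) v) := by
      intro v
      refine hFb1 _ v ?_
      rw [SimpleGraph.dist_comm]
      exact hnear v
    -- initial segments of layers are finite
    have hfinLayers : ∀ q : ℕ, {u : V | G.dist (a 0) u ≤ q}.Finite := by
      intro q
      refine Set.Finite.subset (((Finset.range (q + 1)).biUnion Fb).finite_toSet) ?_
      intro u hu
      simp only [Finset.coe_biUnion, Finset.coe_range, Set.mem_iUnion]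
      exact ⟨G.dist (a 0) u, by simpa using Nat.lt_succ_of_le hu, hmemFb u⟩
    -- countability of V
    have hcount : Countable V := by
      rw [← Set.countable_univ_iff]
      refine Set.Countable.mono (fun v _ => ?_)
        (Set.countable_iUnion fun n => (hfinLayers n).countable)
      exact Set.mem_iUnion.mpr ⟨G.dist (a 0) v,
        show G.dist (a 0) v ≤ G.dist (a 0) v from le_refl _⟩
    obtain ⟨g⟩ := nonempty_embedding_nat V
    -- the lexicographic key
    set key : V → ℕ ×ₗ ℕ := fun v => toLex (G.dist (a 0) v, g v) with hkeydef
    have keyinj : Function.Injective key := by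
      intro u v h
      have : (G.dist (a 0) u, g u) = (G.dist (a 0) v, g v) := toLex.injective h
      exact g.injective (congrArg Prod.snd this)
    have keyfst : ∀ {u v : V}, key u < key v → G.dist (a 0) u ≤ G.dist (a 0) v := by
      intro u v h
      rcases Prod.Lex.lt_iff.mp h with h' | ⟨h', _⟩
      · exact h'.le
      · exact h'.le
    set P : V → Set V := fun v => {u | key u < key v} with hPdef
    have hPfin : ∀ v, (P v).Finite := by
      intro v
      refine (hfinLayers (G.dist (a 0) v)).subset ?_
      intro u hu
      exact keyfst hu
    set f : V → ℕ := fun v => (P v).ncard with hfdef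
    have hPmono : ∀ {u v : V}, key u < key v → P u ⊆ P v :=
      fun h w hw => lt_trans hw h
    have hflt : ∀ {u v : V}, key u < key v → f u < f v := by
      intro u v h
      refine Set.ncard_lt_ncard ?_ (hPfin v)
      refine ⟨hPmono h, fun hsub => ?_⟩
      exact lt_irrefl (key u) (hsub h)
    have hfinj : Function.Injective f := by
      intro u v h
      rcases lt_trichotomy (key u) (key v) with hlt | heq | hgt
      · exact absurd h (hflt hlt).ne
      · exact keyinj heq
      · exact absurd h.symm (hflt hgt).ne
    -- surjectivity of f
    have hdown : ∀ k : ℕ, ∀ v : V, ∀ n : ℕ, f v = n + k → ∃ u, f u = n := by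
      intro k
      induction k with
      | zero => exact fun v n h => ⟨v, by omega⟩
      | succ k ih =>
        intro v n h
        have hne : (P v).Nonempty := by
          rw [Set.nonempty_iff_ne_empty]
          intro hemp
          have : f v = 0 := by
            simp only [hfdef, hemp, Set.ncard_empty]
          omega
        obtain ⟨u, hu, humax⟩ := Set.Finite.exists_maximalFor key (P v) (hPfin v) hne
        have hmax : ∀ w ∈ P v, key w ≤ key u := by
          intro w hw
          by_contra hcon
          push_neg at hcon
          exact hcon.ne (le_antisymm hcon.le (humax hw hcon.le))
        have hPu : P u = P v \ {u} := by
          ext w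
          constructor
          · intro hw
            exact ⟨hPmono hu hw, fun hwu => lt_irrefl (key u) (by
              rw [Set.mem_singleton_iff] at hwu
              rw [hwu] at hw
              exact hw)⟩
          · rintro ⟨hw1, hw2⟩
            rw [Set.mem_singleton_iff] at hw2
            have hle := hmax w hw1
            rcases lt_or_eq_of_le hle with hlt | heq
            · exact hlt
            · exact absurd (keyinj heq) hw2
        have hfu : f u = n + k := by
          have : f u = f v - 1 := by
            rw [hfdef]
            simp only [hPu]
            rw [Set.ncard_diff_singleton_of_mem hu]
          omega
        exact ih u n hfu
    have hfsurj : Function.Surjective f := by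
      intro n
      obtain ⟨v, hv⟩ : ∃ v, n ≤ f v := by
        by_contra hcon
        push_neg at hcon
        have hinj2 : Function.Injective (fun v : V => (⟨f v, hcon v⟩ : Fin n)) := by
          intro u v h
          exact hfinj (congrArg Fin.val h)
        have : Finite V := Finite.of_injective _ hinj2
        exact not_finite V
      exact hdown (f v - n) v n (by omega)
    set e : V ≃ ℕ := Equiv.ofBijective f ⟨hfinj, hfsurj⟩ with hedef
    have hesymm : ∀ i : ℕ, f (e.symm i) = i := fun i => e.apply_symm_apply i
    -- first quasi-isometry inequality
    have main1 : ∀ u v : V, key u < key v → Nat.dist (f u) (f v) ≤ 2 * N * G.dist u v := by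
      intro u v hlt
      have hfle : f u ≤ f v := (hflt hlt).le
      rw [Nat.dist_eq_sub_of_le hfle]
      have hsub : P u ⊆ P v := hPmono hlt
      have hdiff : f v - f u = (P v \ P u).ncard := (Set.ncard_diff hsub (hPfin u)).symm
      have hpq : G.dist (a 0) u ≤ G.dist (a 0) v := keyfst hlt
      have hqd : G.dist (a 0) v ≤ G.dist (a 0) u + G.dist u v := hG.dist_triangle
      have hsubset : (P v \ P u) ⊆
          ↑((Finset.Icc (G.dist (a 0) u) (G.dist (a 0) v)).biUnion Fb) := by
        rintro w ⟨hw1, hw2⟩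
        have h1 : G.dist (a 0) w ≤ G.dist (a 0) v := keyfst hw1
        have h2 : G.dist (a 0) u ≤ G.dist (a 0) w := by
          have : ¬ key w < key u := hw2
          push_neg at this
          rcases lt_or_eq_of_le this with hlt2 | heq2
          · exact keyfst hlt2
          · rw [← keyinj heq2]
        simp only [Finset.coe_biUnion, Set.mem_iUnion, Finset.mem_coe]
        exact ⟨G.dist (a 0) w, Finset.mem_Icc.mpr ⟨h2, h1⟩, hmemFb w⟩
      have hcard : (P v \ P u).ncard ≤
          (G.dist (a 0) v - G.dist (a 0) u + 1) * N := by
        calc (P v \ P u).ncard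
            ≤ ((Finset.Icc (G.dist (a 0) u) (G.dist (a 0) v)).biUnion Fb).card := by
              rw [← Set.ncard_coe_finset]
              exact Set.ncard_le_ncard hsubset (Finset.finite_toSet _)
          _ ≤ (Finset.Icc (G.dist (a 0) u) (G.dist (a 0) v)).card * N :=
              Finset.card_biUnion_le_card_mul _ _ _ (fun k _ => hFb2 k)
          _ = (G.dist (a 0) v - G.dist (a 0) u + 1) * N := by
              rw [Nat.card_Icc]
              congr 1
              omega
      have hd1 : 1 ≤ G.dist u v := by
        have hne : u ≠ v := fun h => lt_irrefl (key u) (by rw [h] at hlt ⊢; exact hlt)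
        exact hG.pos_dist_of_ne hne
      calc f v - f u ≤ (G.dist (a 0) v - G.dist (a 0) u + 1) * N := by
            rw [hdiff]; exact hcard
        _ ≤ (2 * G.dist u v) * N := by
            refine Nat.mul_le_mul_right _ ?_
            omega
        _ = 2 * N * G.dist u v := by ring
    -- second quasi-isometry inequality
    have main2 : ∀ u v : V, key u < key v → G.dist u v ≤ (4 * α + 1) * (f v - f u) := by
      intro u v hlt
      have hpq : G.dist (a 0) u ≤ G.dist (a 0) v := keyfst hlt
      have hfv : f u < f v := hflt hlt
      -- interior arrow vertices inject into the interval of f-values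
      have hcardle : (Finset.Ioo (G.dist (a 0) u) (G.dist (a 0) v)).card ≤
          (Finset.Ioo (f u) (f v)).card := by
        refine Finset.card_le_card_of_injOn (fun k => f (a k)) ?_ ?_
        · intro k hk
          rw [Finset.mem_coe, Finset.mem_Ioo] at hk
          have hk1 : key u < key (a k) := by
            rw [hkeydef]
            refine Prod.Lex.lt_iff.mpr (Or.inl ?_)
            have : G.dist (a 0) (a k) = k := (ha.2 k).2
            simp only [this]
            exact hk.1
          have hk2 : key (a k) < key v := by
            rw [hkeydef]
            refine Prod.Lex.lt_iff.mpr (Or.inl ?_)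
            have : G.dist (a 0) (a k) = k := (ha.2 k).2
            simp only [this]
            exact hk.2
          exact Finset.mem_Ioo.mpr ⟨hflt hk1, hflt hk2⟩
        · intro x _ y _ hxy
          exact ha.1 (hfinj hxy)
      rw [Nat.card_Ioo, Nat.card_Ioo] at hcardle
      have hqp : G.dist (a 0) v - G.dist (a 0) u ≤ f v - f u := by omega
      have h1 : G.dist u (a (G.dist (a 0) u)) ≤ 2 * α := hnear u
      have h2 : G.dist (a (G.dist (a 0) v)) v ≤ 2 * α := by
        rw [SimpleGraph.dist_comm]
        exact hnear v
      have h3 : G.dist (a (G.dist (a 0) u)) (a (G.dist (a 0) v)) ≤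
          G.dist (a 0) v - G.dist (a 0) u := by
        have := arrow_dist_le' hG ha (G.dist (a 0) u) (G.dist (a 0) v)
        rwa [Nat.dist_eq_sub_of_le hpq] at this
      have htotal : G.dist u v ≤ 4 * α + (f v - f u) := by
        calc G.dist u v
            ≤ G.dist u (a (G.dist (a 0) u)) + G.dist (a (G.dist (a 0) u)) v :=
              hG.dist_triangle
          _ ≤ G.dist u (a (G.dist (a 0) u)) +
              (G.dist (a (G.dist (a 0) u)) (a (G.dist (a 0) v)) +
               G.dist (a (G.dist (a 0) v)) v) := by
              have := hG.dist_triangle (u := a (G.dist (a 0) u))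
                (v := a (G.dist (a 0) v)) (w := v)
              omega
          _ ≤ 4 * α + (f v - f u) := by omega
      calc G.dist u v ≤ 4 * α + (f v - f u) := htotal
        _ ≤ 4 * α * (f v - f u) + 1 * (f v - f u) := by
            have h4 : 1 ≤ f v - f u := by omega
            have := Nat.mul_le_mul_left (4 * α) h4
            omega
        _ = (4 * α + 1) * (f v - f u) := by ring
    refine ⟨e, 2 * N, 4 * α + 1, ?_, ?_⟩
    · intro u v
      have heq : ∀ w : V, (e w : ℕ) = f w := fun w => rfl
      rw [heq, heq]
      rcases lt_trichotomy (key u) (key v) with hlt | heq2 | hgt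
      · exact main1 u v hlt
      · rw [keyinj heq2]
        simp [SimpleGraph.dist_self]
      · rw [Nat.dist_comm, SimpleGraph.dist_comm]
        exact main1 v u hgt
    · intro i j
      set u := e.symm i with hu
      set v := e.symm j with hv
      have hfu : f u = i := hesymm i
      have hfv : f v = j := hesymm j
      rcases lt_trichotomy (key u) (key v) with hlt | heq2 | hgt
      · have := main2 u v hlt
        have hij : i < j := by rw [← hfu, ← hfv]; exact hflt hlt
        rw [Nat.dist_eq_sub_of_le hij.le]
        rw [hfu, hfv] at this
        exact this
      · rw [keyinj heq2]
        simp [SimpleGraph.dist_self]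
      · have := main2 v u hgt
        have hij : j < i := by rw [← hfu, ← hfv]; exact hflt hgt
        rw [Nat.dist_eq_sub_of_le_right hij.le, SimpleGraph.dist_comm]
        rw [hfu, hfv] at this
        exact this
  tfae_finish
end

section
/- Let Γ = (V,E) be an infinite connected simple graph with path metric d which is an asymptotic ray, let (aₙ)ₙ∈ℕ be an arrow in Γ, and let A = {aₙ : n ∈ ℕ}. Then there exists a natural number r such that V = B(A,r), i.e., every vertex of Γ lies at distance at most r from some vertex aₙ. -/
/-- If an infinite connected graph `G` is an asymptotic ray and `(aₙ)` is an
arrow in `G`, then there is `r : ℕ` such that every vertex lies at distance at most `r`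
from some `aₙ`. -/
theorem ball_around_arrow_of_asymptoticRay {V : Type*} [Infinite V] (G : SimpleGraph V)
    (hG : G.Connected) (hray : IsAsymptoticRay G) (a : ℕ → V) (ha : IsArrow G a) :
    ∃ r : ℕ, ∀ v : V, ∃ n : ℕ, G.dist v (a n) ≤ r := by
  obtain ⟨f, m, m', h1, h2⟩ := hray
  obtain ⟨hinj, hstep⟩ := ha
  set b : ℕ → ℕ := fun n => f (a n) with hb
  have hm' : 0 < m' := by
    rcases Nat.eq_zero_or_pos m' with h | h
    · exfalso
      have := h2 0 1
      rw [h, zero_mul, Nat.le_zero, hG.dist_eq_zero_iff] at this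
      exact zero_ne_one (f.symm.injective this)
    · exact h
  -- back direction: dist v (a n) ≤ m' * Nat.dist (f v) (b n)
  have hback : ∀ (v : V) (n : ℕ), G.dist v (a n) ≤ m' * Nat.dist (f v) (b n) := by
    intro v n
    have := h2 (f v) (b n)
    simpa [hb, Equiv.symm_apply_apply] using this
  -- step bound
  have hstepb : ∀ n : ℕ, Nat.dist (b n) (b (n + 1)) ≤ m := by
    intro n
    have h := h1 (a n) (a (n + 1))
    have hd : G.dist (a n) (a (n + 1)) = 1 :=
      SimpleGraph.dist_eq_one_iff_adj.mpr (hstep n).1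
    rw [hd, mul_one] at h
    exact h
  -- growth
  have hgrow : ∀ n : ℕ, n ≤ m' * (b 0 + b n) := by
    intro n
    have h := h2 (b 0) (b n)
    simp only [hb, Equiv.symm_apply_apply] at h
    rw [(hstep n).2] at h
    calc n ≤ m' * Nat.dist (f (a 0)) (f (a n)) := h
      _ ≤ m' * (f (a 0) + f (a n)) := by
          apply Nat.mul_le_mul_left
          simp only [Nat.dist]; omega
  refine ⟨m' * (b 0 + m), fun v => ?_⟩
  set k : ℕ := f v with hk
  have key : ∃ n : ℕ, Nat.dist k (b n) ≤ b 0 + m := by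
    rcases le_or_gt k (b 0) with hkb | hkb
    · exact ⟨0, by simp [Nat.dist]; omega⟩
    · -- find N with k ≤ b N
      have hN : ∃ N : ℕ, k ≤ b N := by
        refine ⟨m' * (b 0 + k) + 1, ?_⟩
        have := hgrow (m' * (b 0 + k) + 1)
        have hlt : m' * (b 0 + k) < m' * (b 0 + b (m' * (b 0 + k) + 1)) := by omega
        have := Nat.lt_of_mul_lt_mul_left hlt
        omega
      classical
      set n₀ := Nat.find hN with hn₀
      have hn₀b : k ≤ b n₀ := Nat.find_spec hN
      have hpos : 0 < n₀ := by
        rcases Nat.eq_zero_or_pos n₀ with h | h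
        · rw [h] at hn₀b; omega
        · exact h
      have hprev : ¬ k ≤ b (n₀ - 1) := Nat.find_min hN (by omega)
      have hstepn : Nat.dist (b (n₀ - 1)) (b (n₀ - 1 + 1)) ≤ m := hstepb _
      rw [Nat.sub_add_cancel hpos] at hstepn
      refine ⟨n₀, ?_⟩
      simp only [Nat.dist] at hstepn ⊢
      omega
  obtain ⟨n, hn⟩ := key
  exact ⟨n, le_trans (hback v n) (Nat.mul_le_mul_left m' hn)⟩
end

section
/- Let Γ = (V,E) be an infinite connected simple graph with path metric d, let (aₙ)ₙ∈ℕ be an arrow in Γ and A = {aₙ : n ∈ ℕ}, and suppose there is a natural number r with V = B(A,r). Then for every n ∈ ℕ, S(a₀,n) ⊆ B(aₙ, 2r); in particular the family {S(a₀,n) : n ∈ ℕ} is uniformly bounded. -/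
/-- If `(aₙ)` is an arrow in an infinite connected graph `G` and
`V = B(A, r)` where `A = {aₙ : n ∈ ℕ}`, then `S(a₀, n) ⊆ B(aₙ, 2r)` for every `n`;
in particular the family of spheres `{S(a₀, n) : n ∈ ℕ}` is uniformly bounded. -/
theorem sphere_subset_ball_of_net {V : Type*} [Infinite V] (G : SimpleGraph V)
    (hG : G.Connected) (a : ℕ → V) (ha : IsArrow G a) (r : ℕ)
    (hr : ∀ v : V, ∃ n : ℕ, G.dist v (a n) ≤ r) :
    (∀ n : ℕ, ∀ u : V, G.dist u (a 0) = n → G.dist u (a n) ≤ 2 * r) ∧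
    (∃ α : ℕ, ∀ n : ℕ, ∃ x : V, ∀ u : V, G.dist u (a 0) = n → G.dist u x ≤ α) := by
  have hstep : ∀ n k : ℕ, G.dist (a n) (a (n + k)) ≤ k := by
    intro n k
    induction k with
    | zero => simp
    | succ k ih =>
      have hadj : G.dist (a (n + k)) (a (n + k + 1)) = 1 :=
        (SimpleGraph.dist_eq_one_iff_adj).2 (ha.2 (n + k)).1
      calc G.dist (a n) (a (n + (k + 1)))
          ≤ G.dist (a n) (a (n + k)) + G.dist (a (n + k)) (a (n + k + 1)) := by
            have := hG.dist_triangle (u := a n) (v := a (n + k)) (w := a (n + k + 1))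
            simpa [Nat.add_assoc] using this
        _ ≤ k + 1 := by omega
  have hmn : ∀ m n : ℕ, G.dist (a m) (a n) ≤ max m n - min m n := by
    intro m n
    rcases le_total m n with h | h
    · have := hstep m (n - m)
      rw [Nat.add_sub_cancel' h] at this
      simpa [Nat.max_eq_right h, Nat.min_eq_left h] using this
    · have := hstep n (m - n)
      rw [Nat.add_sub_cancel' h] at this
      rw [SimpleGraph.dist_comm]
      simpa [Nat.max_eq_left h, Nat.min_eq_right h] using this
  have main : ∀ n : ℕ, ∀ u : V, G.dist u (a 0) = n → G.dist u (a n) ≤ 2 * r := by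
    intro n u hu
    obtain ⟨m, hm⟩ := hr u
    have hdm : G.dist (a 0) (a m) = m := (ha.2 m).2
    -- n ≤ m + r
    have h1 : n ≤ G.dist u (a m) + G.dist (a m) (a 0) := by
      have := hG.dist_triangle (u := u) (v := a m) (w := a 0)
      omega
    have h2 : m ≤ G.dist (a 0) u + G.dist u (a m) := by
      have := hG.dist_triangle (u := a 0) (v := u) (w := a m)
      omega
    rw [SimpleGraph.dist_comm] at hdm
    have hu' : G.dist (a 0) u = n := by rw [SimpleGraph.dist_comm]; exact hu
    have hnm : n ≤ m + r := by omega
    have hmn' : m ≤ n + r := by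
      rw [hu'] at h2; omega
    have h3 : G.dist (a m) (a n) ≤ max m n - min m n := hmn m n
    have h4 : G.dist u (a n) ≤ G.dist u (a m) + G.dist (a m) (a n) :=
      hG.dist_triangle
    omega
  exact ⟨main, 2 * r, fun n => ⟨a n, main n⟩⟩
end

section
/- Let Γ = (V,E) be an infinite connected simple graph with path metric d, let s be a natural number such that ρ(v) ≤ s for all v ∈ V, let (aₙ)ₙ∈ℕ be an arrow in Γ, and suppose there is a natural number α such that for every n ∈ ℕ there is a vertex x with S(a₀,n) ⊆ B(x,α). Then Γ is an asymptotic ray. -/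
/-- Enumeration of a countable-by-`key` type in increasing `key` order. -/
noncomputable def enumF {V : Type*} [Infinite V] (key : V → ℕ ×ₗ ℕ) : ℕ → V
  | n =>
    (InvImage.wf key (wellFounded_lt : WellFounded ((· < ·) : ℕ ×ₗ ℕ → ℕ ×ₗ ℕ → Prop))).min
      ((Set.range fun k : Fin n => enumF key k.1)ᶜ)
      ((Set.finite_range _).infinite_compl.nonempty)
  termination_by n => n
  decreasing_by all_goals exact k.2

lemma enumF_mem {V : Type*} [Infinite V] (key : V → ℕ ×ₗ ℕ) (n : ℕ) :
    enumF key n ∈ (Set.range fun k : Fin n => enumF key k.1)ᶜ := by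
  rw [enumF]
  exact WellFounded.min_mem _ _ _

lemma enumF_not_lt {V : Type*} [Infinite V] (key : V → ℕ ×ₗ ℕ) (n : ℕ) {v : V}
    (hv : v ∈ (Set.range fun k : Fin n => enumF key k.1)ᶜ) :
    ¬ key v < key (enumF key n) := by
  rw [enumF]
  exact WellFounded.not_lt_min
    (InvImage.wf key (wellFounded_lt : WellFounded ((· < ·) : ℕ ×ₗ ℕ → ℕ ×ₗ ℕ → Prop))) _ hv

lemma enumF_ne {V : Type*} [Infinite V] (key : V → ℕ ×ₗ ℕ) {m n : ℕ} (h : m < n) :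
    enumF key m ≠ enumF key n := by
  have hmem := enumF_mem key n
  simp only [Set.mem_compl_iff, Set.mem_range, not_exists] at hmem
  intro he
  exact hmem ⟨m, h⟩ he

lemma enumF_key_strictMono {V : Type*} [Infinite V] (key : V → ℕ ×ₗ ℕ)
    (hkey : Function.Injective key) :
    StrictMono fun n => key (enumF key n) := by
  apply strictMono_nat_of_lt_succ
  intro n
  have h1 : enumF key (n + 1) ∈ (Set.range fun k : Fin n => enumF key k.1)ᶜ := by
    have hmem := enumF_mem key (n + 1)
    simp only [Set.mem_compl_iff, Set.mem_range, not_exists] at hmem ⊢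
    intro k
    exact hmem ⟨k.1, Nat.lt_succ_of_lt k.2⟩
  have h2 := enumF_not_lt key n h1
  have h3 : enumF key n ≠ enumF key (n + 1) := enumF_ne key (Nat.lt_succ_self n)
  rcases (not_lt.mp h2).lt_or_eq with h' | h'
  · exact h'
  · exact absurd (hkey h') h3

lemma enumF_surjective {V : Type*} [Infinite V] (key : V → ℕ ×ₗ ℕ)
    (hkey : Function.Injective key) (hfin : ∀ v : V, {w | key w < key v}.Finite) :
    Function.Surjective (enumF key) := by
  have hinj : Function.Injective (enumF key) := fun a b hab =>
    (enumF_key_strictMono key hkey).injective (by rw [hab])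
  intro v
  by_contra h
  push_neg at h
  have hmem : ∀ n, v ∈ (Set.range fun k : Fin n => enumF key k.1)ᶜ := by
    intro n
    simp only [Set.mem_compl_iff, Set.mem_range, not_exists]
    intro k he
    exact h k.1 he
  have hlt : ∀ n, key (enumF key n) < key v := by
    intro n
    have h2 := enumF_not_lt key n (hmem n)
    rcases (not_lt.mp h2).lt_or_eq with h' | h'
    · exact h'
    · exact absurd (hkey h') (h n)
  have hsub : Set.range (enumF key) ⊆ {w | key w < key v} := by
    rintro _ ⟨n, rfl⟩
    exact hlt n
  exact (Set.infinite_range_of_injective hinj) ((hfin v).subset hsub)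

lemma ball_small {V : Type*} (G : SimpleGraph V) (hG : G.Connected) (s : ℕ)
    (hdeg : ∀ v : V, (G.neighborSet v).encard ≤ (s : ℕ∞)) :
    ∀ (r : ℕ) (x : V), {v | G.dist v x ≤ r}.Finite ∧ {v | G.dist v x ≤ r}.ncard ≤ (s + 1) ^ r := by
  have hN : ∀ v : V, (G.neighborSet v).Finite ∧ (G.neighborSet v).ncard ≤ s := fun v =>
    Set.encard_le_coe_iff_finite_ncard_le.mp (hdeg v)
  intro r
  induction r with
  | zero =>
    intro x
    have hsub : {v | G.dist v x ≤ 0} ⊆ {x} := by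
      intro v hv
      simp only [Set.mem_setOf_eq, Nat.le_zero] at hv
      exact (hG.dist_eq_zero_iff).mp hv
    refine ⟨(Set.finite_singleton x).subset hsub, ?_⟩
    calc {v | G.dist v x ≤ 0}.ncard ≤ ({x} : Set V).ncard :=
          Set.ncard_le_ncard hsub (Set.finite_singleton x)
      _ = 1 := Set.ncard_singleton x
      _ ≤ (s + 1) ^ 0 := by simp
  | succ r ih =>
    intro x
    obtain ⟨hfB, hcB⟩ := ih x
    classical
    set T := hfB.toFinset.biUnion (fun u => insert u (hN u).1.toFinset) with hT
    have hsub : {v | G.dist v x ≤ r + 1} ⊆ ↑T := by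
      intro v hv
      simp only [Set.mem_setOf_eq] at hv
      rcases Nat.lt_or_ge (G.dist v x) (r + 1) with h | h
      · have hvB : v ∈ hfB.toFinset := by
          rw [Set.Finite.mem_toFinset]
          exact Nat.lt_succ_iff.mp h
        exact Finset.mem_coe.mpr (Finset.mem_biUnion.mpr ⟨v, hvB, Finset.mem_insert_self _ _⟩)
      · have hd : G.dist v x = r + 1 := le_antisymm hv h
        obtain ⟨p, hp⟩ := hG.exists_walk_length_eq_dist v x
        rw [hd] at hp
        cases p with
        | nil => simp at hp
        | cons hadj q =>
          rename_i u
          have hq : q.length = r := by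
            simpa [SimpleGraph.Walk.length_cons] using hp
          have huB : u ∈ hfB.toFinset := by
            rw [Set.Finite.mem_toFinset]
            show G.dist u x ≤ r
            rw [← hq]
            exact SimpleGraph.dist_le q
          refine Finset.mem_coe.mpr (Finset.mem_biUnion.mpr ⟨u, huB, ?_⟩)
          refine Finset.mem_insert_of_mem ?_
          rw [Set.Finite.mem_toFinset]
          exact hadj.symm
    have hTcard : T.card ≤ (s + 1) ^ r * (s + 1) := by
      have h1 : T.card ≤ hfB.toFinset.card * (s + 1) := by
        apply Finset.card_biUnion_le_card_mul
        intro u _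
        calc (insert u (hN u).1.toFinset).card ≤ (hN u).1.toFinset.card + 1 :=
              Finset.card_insert_le _ _
          _ ≤ s + 1 := by
              have := (hN u).2
              rw [Set.ncard_eq_toFinset_card _ (hN u).1] at this
              omega
      have h2 : hfB.toFinset.card ≤ (s + 1) ^ r := by
        rw [← Set.ncard_eq_toFinset_card _ hfB]
        exact hcB
      calc T.card ≤ hfB.toFinset.card * (s + 1) := h1
        _ ≤ (s + 1) ^ r * (s + 1) := Nat.mul_le_mul_right _ h2
    refine ⟨T.finite_toSet.subset hsub, ?_⟩
    calc {v | G.dist v x ≤ r + 1}.ncard ≤ (↑T : Set V).ncard :=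
          Set.ncard_le_ncard hsub T.finite_toSet
      _ = T.card := Set.ncard_coe_finset T
      _ ≤ (s + 1) ^ r * (s + 1) := hTcard
      _ = (s + 1) ^ (r + 1) := (pow_succ _ _).symm

lemma arrow_chain {V : Type*} (G : SimpleGraph V) (hG : G.Connected) {a : ℕ → V}
    (hadj : ∀ n, G.Adj (a n) (a (n + 1))) : ∀ k t : ℕ, G.dist (a k) (a (k + t)) ≤ t := by
  intro k t
  induction t with
  | zero => simp
  | succ t ih =>
    calc G.dist (a k) (a (k + t + 1)) ≤
          G.dist (a k) (a (k + t)) + G.dist (a (k + t)) (a (k + t + 1)) := hG.dist_triangle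
      _ ≤ t + 1 := by
          have h1 : G.dist (a (k + t)) (a (k + t + 1)) = 1 :=
            SimpleGraph.dist_eq_one_iff_adj.mpr (hadj _)
          omega

theorem asymptoticRay_of_bounded_spheres' {V : Type*} [Infinite V] (G : SimpleGraph V)
    (hG : G.Connected) (s : ℕ) (hdeg : ∀ v : V, (G.neighborSet v).encard ≤ (s : ℕ∞))
    (a : ℕ → V) (ha : (Function.Injective a ∧ ∀ n : ℕ, G.Adj (a n) (a (n + 1)) ∧ G.dist (a 0) (a n) = n)) (α : ℕ)
    (hsph : ∀ n : ℕ, ∃ x : V, ∀ u : V, G.dist u (a 0) = n → G.dist u x ≤ α) :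
    ∃ f : V ≃ ℕ, ∃ m m' : ℕ,
      (∀ u v : V, Nat.dist (f u) (f v) ≤ m * G.dist u v) ∧
      (∀ i j : ℕ, G.dist (f.symm i) (f.symm j) ≤ m' * Nat.dist i j) := by
  classical
  obtain ⟨hainj, haprop⟩ := ha
  set g : V → ℕ := fun v => G.dist (a 0) v with hgdef
  have hga : ∀ n, g (a n) = n := fun n => (haprop n).2
  set C := (s + 1) ^ α with hCdef
  have hC : ∀ n : ℕ, {v | g v = n}.Finite ∧ {v | g v = n}.ncard ≤ C := by
    intro n
    obtain ⟨x, hx⟩ := hsph n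
    have hsub : {v | g v = n} ⊆ {v | G.dist v x ≤ α} := by
      intro v hv
      exact hx v (by rw [SimpleGraph.dist_comm]; exact hv)
    obtain ⟨hf, hc⟩ := ball_small G hG s hdeg α x
    exact ⟨hf.subset hsub, (Set.ncard_le_ncard hsub hf).trans hc⟩
  have hC1 : 1 ≤ C := Nat.one_le_pow _ _ (Nat.succ_pos s)
  have hcount : Countable V := by
    have hsub : (Set.univ : Set V) ⊆ ⋃ n : ℕ, {v | g v = n} := fun v _ =>
      Set.mem_iUnion.mpr ⟨g v, rfl⟩
    exact Set.countable_univ_iff.mp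
      ((Set.countable_iUnion (fun n => ((hC n).1).countable)).mono hsub)
  obtain ⟨e, he⟩ := Countable.exists_injective_nat V
  set key : V → ℕ ×ₗ ℕ := fun v => toLex (g v, e v) with hkeydef
  have hkeyinj : Function.Injective key := by
    intro u v h
    exact he (congrArg (fun p : ℕ ×ₗ ℕ => (ofLex p).2) h)
  have hglt : ∀ {u v : V}, g u < g v → key u < key v := by
    intro u v h
    exact Prod.Lex.lt_iff.mpr (Or.inl h)
  have hkey_g : ∀ {u v : V}, key u ≤ key v → g u ≤ g v := by
    intro u v h
    rcases Prod.Lex.le_iff.mp h with h | h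
    · exact h.le
    · exact h.1.le
  have hfin : ∀ v : V, {w | key w < key v}.Finite := by
    intro v
    have hsub : {w | key w < key v} ⊆ ⋃ n ∈ Set.Iic (g v), {w | g w = n} := by
      intro w hw
      exact Set.mem_biUnion (hkey_g (le_of_lt hw)) rfl
    exact ((Set.finite_Iic (g v)).biUnion (fun n _ => (hC n).1)).subset hsub
  have hmono : StrictMono fun n => key (enumF key n) := enumF_key_strictMono key hkeyinj
  have hinj : Function.Injective (enumF key) := fun x y hxy =>
    hmono.injective (by rw [hxy])
  have hsurj := enumF_surjective key hkeyinj hfin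
  set Fe : ℕ ≃ V := Equiv.ofBijective _ ⟨hinj, hsurj⟩ with hFe
  have hFe_apply : ∀ n, Fe n = enumF key n := fun n => rfl
  have hf_lt : ∀ u v : V, key u < key v ↔ Fe.symm u < Fe.symm v := by
    intro u v
    conv_lhs => rw [← Fe.apply_symm_apply u, ← Fe.apply_symm_apply v]
    exact hmono.lt_iff_lt
  have hkey_le_of_f_le : ∀ {u v : V}, Fe.symm u ≤ Fe.symm v → key u ≤ key v := by
    intro u v h
    by_contra hc
    push_neg at hc
    exact absurd ((hf_lt v u).mp hc) (not_lt.mpr h)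
  have hg_le_of_f_le : ∀ {u v : V}, Fe.symm u ≤ Fe.symm v → g u ≤ g v := fun h =>
    hkey_g (hkey_le_of_f_le h)
  -- forward Lipschitz bound
  have main1 : ∀ u v : V, Fe.symm u ≤ Fe.symm v →
      Fe.symm v - Fe.symm u ≤ 2 * C * G.dist u v := by
    intro u v huv
    rcases eq_or_ne u v with rfl | hne
    · simp
    · have hk1 : 1 ≤ G.dist u v := hG.pos_dist_of_ne hne
      have hguv : g u ≤ g v := hg_le_of_f_le huv
      have hgk : g v ≤ g u + G.dist u v := hG.dist_triangle
      set T := (Finset.Icc (g u) (g v)).biUnion (fun n => (hC n).1.toFinset) with hT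
      have hmem : ∀ i ∈ Finset.Icc (Fe.symm u) (Fe.symm v), enumF key i ∈ T := by
        intro i hi
        rw [Finset.mem_Icc] at hi
        have hfi : Fe.symm (enumF key i) = i := Fe.symm_apply_apply i
        have h1 : g u ≤ g (enumF key i) := hg_le_of_f_le (by rw [hfi]; exact hi.1)
        have h2 : g (enumF key i) ≤ g v := hg_le_of_f_le (by rw [hfi]; exact hi.2)
        refine Finset.mem_biUnion.mpr ⟨g (enumF key i), Finset.mem_Icc.mpr ⟨h1, h2⟩, ?_⟩
        rw [Set.Finite.mem_toFinset]
        exact rfl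
      have hcard := Finset.card_le_card_of_injOn (enumF key) hmem
        (fun x _ y _ hxy => hinj hxy)
      have hTcard : T.card ≤ (Finset.Icc (g u) (g v)).card * C := by
        apply Finset.card_biUnion_le_card_mul
        intro n _
        rw [← Set.ncard_eq_toFinset_card _ (hC n).1]
        exact (hC n).2
      have step1 : Fe.symm v + 1 - Fe.symm u ≤ (g v + 1 - g u) * C := by
        calc Fe.symm v + 1 - Fe.symm u = (Finset.Icc (Fe.symm u) (Fe.symm v)).card :=
              (Nat.card_Icc _ _).symm
          _ ≤ T.card := hcard
          _ ≤ (Finset.Icc (g u) (g v)).card * C := hTcard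
          _ = (g v + 1 - g u) * C := by rw [Nat.card_Icc]
      have step2 : (g v + 1 - g u) * C ≤ (2 * G.dist u v) * C :=
        Nat.mul_le_mul_right _ (by omega)
      have step3 : (2 * G.dist u v) * C = 2 * C * G.dist u v := by ring
      have step4 : Fe.symm v + 1 - Fe.symm u ≤ 2 * C * G.dist u v := by
        rw [← step3]; exact step1.trans step2
      exact le_trans (Nat.sub_le_sub_right (Nat.le_succ _) _) step4
  -- reverse Lipschitz bound
  have hnear : ∀ w : V, G.dist w (a (g w)) ≤ 2 * α := by
    intro w
    obtain ⟨x, hx⟩ := hsph (g w)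
    have h1 : G.dist w x ≤ α := hx w (by rw [SimpleGraph.dist_comm])
    have h2 : G.dist (a (g w)) x ≤ α := hx _ (by rw [SimpleGraph.dist_comm]; exact hga _)
    calc G.dist w (a (g w)) ≤ G.dist w x + G.dist x (a (g w)) := hG.dist_triangle
      _ ≤ α + α := add_le_add h1 (by rw [SimpleGraph.dist_comm]; exact h2)
      _ = 2 * α := by ring
  have main2 : ∀ i j : ℕ, i ≤ j →
      G.dist (enumF key i) (enumF key j) ≤ (4 * α + 1) * (j - i) := by
    intro i j hij
    rcases eq_or_lt_of_le hij with rfl | hij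
    · simp
    · set u := enumF key i with hu
      set v := enumF key j with hv
      have hfu : Fe.symm u = i := Fe.symm_apply_apply i
      have hfv : Fe.symm v = j := Fe.symm_apply_apply j
      have hguv : g u ≤ g v := hg_le_of_f_le (by rw [hfu, hfv]; exact hij.le)
      have hgap : g v - g u ≤ j - i := by
        have hcard := Finset.card_le_card_of_injOn (fun n => Fe.symm (a n))
          (s := Finset.Ioo (g u) (g v)) (t := Finset.Ioo i j) ?_ ?_
        · rw [Nat.card_Ioo, Nat.card_Ioo] at hcard
          omega
        · intro n hn
          rw [Finset.mem_coe, Finset.mem_Ioo] at hn ⊢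
          have h1 : key u < key (a n) := hglt (by rw [hga n]; exact hn.1)
          have h2 : key (a n) < key v := hglt (by rw [hga n]; exact hn.2)
          constructor
          · rw [← hfu]; exact (hf_lt _ _).mp h1
          · rw [← hfv]; exact (hf_lt _ _).mp h2
        · intro x _ y _ hxy
          exact hainj (Fe.symm.injective hxy)
      have hchain : G.dist (a (g u)) (a (g v)) ≤ g v - g u := by
        have h := arrow_chain G hG (fun n => (haprop n).1) (g u) (g v - g u)
        rwa [Nat.add_sub_cancel' hguv] at h
      have htot : G.dist u v ≤ 4 * α + (j - i) := by
        calc G.dist u v ≤ G.dist u (a (g u)) + G.dist (a (g u)) v := hG.dist_triangle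
          _ ≤ G.dist u (a (g u)) + (G.dist (a (g u)) (a (g v)) + G.dist (a (g v)) v) :=
              add_le_add_right hG.dist_triangle _
          _ ≤ 2 * α + ((g v - g u) + 2 * α) := by
              have h3 : G.dist (a (g v)) v ≤ 2 * α := by
                rw [SimpleGraph.dist_comm]; exact hnear v
              exact add_le_add (hnear u) (add_le_add hchain h3)
          _ ≤ 4 * α + (j - i) := by omega
      have hfinal : 4 * α + (j - i) ≤ (4 * α + 1) * (j - i) := by
        have h1 : 0 < j - i := by omega
        have h2 : 4 * α ≤ 4 * α * (j - i) := Nat.le_mul_of_pos_right _ h1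
        calc 4 * α + (j - i) ≤ 4 * α * (j - i) + (j - i) := Nat.add_le_add_right h2 _
          _ = (4 * α + 1) * (j - i) := by ring
      exact htot.trans hfinal
  refine ⟨Fe.symm, 2 * C, 4 * α + 1, ?_, ?_⟩
  · intro u v
    rcases le_total (Fe.symm u) (Fe.symm v) with h | h
    · rw [Nat.dist_eq_sub_of_le h]
      exact main1 u v h
    · rw [Nat.dist_eq_sub_of_le_right h, SimpleGraph.dist_comm]
      exact main1 v u h
  · intro i j
    simp only [Equiv.symm_symm]
    rcases le_total i j with h | h
    · rw [Nat.dist_eq_sub_of_le h]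
      exact main2 i j h
    · rw [Nat.dist_eq_sub_of_le_right h, SimpleGraph.dist_comm]
      exact main2 j i h

/-- If `G` is an infinite connected graph with degrees bounded by `s`,
`(aₙ)` is an arrow in `G`, and the spheres around `a₀` are uniformly bounded, then `G`
is an asymptotic ray. -/
theorem asymptoticRay_of_bounded_spheres {V : Type*} [Infinite V] (G : SimpleGraph V)
    (hG : G.Connected) (s : ℕ) (hdeg : ∀ v : V, (G.neighborSet v).encard ≤ (s : ℕ∞))
    (a : ℕ → V) (ha : IsArrow G a) (α : ℕ)
    (hsph : ∀ n : ℕ, ∃ x : V, ∀ u : V, G.dist u (a 0) = n → G.dist u x ≤ α) :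
    IsAsymptoticRay G := by
  exact asymptoticRay_of_bounded_spheres' G hG s hdeg a ha α hsph
end

section
/- Let T = (V,E) be an infinite tree (connected acyclic simple graph) with path metric d, let s be a natural number such that ρ(v) ≤ s for all v ∈ V, let (aₙ)ₙ∈ℕ be an arrow in T, and for each n let T(aₙ) denote the connected component of aₙ in the graph obtained from T by deleting all edges (aₖ, a_{k+1}), k ∈ ℕ. Then T is an asymptotic ray if and only if there exists a natural number t such that |V(T(aₙ))| ≤ t for all n ∈ ℕ, where V(T(aₙ)) is the vertex set of T(aₙ). -/
open SimpleGraph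

/-- The vertex set of `T(aₙ)`: the connected component of `a n` in the graph obtained
from `G` by deleting the edges `(aₖ, a_{k+1})`, `k ∈ ℕ` (but not the vertices). -/
def arrowComponent {V : Type*} (G : SimpleGraph V) (a : ℕ → V) (n : ℕ) : Set V :=
  {v : V | (G.deleteEdges {e : Sym2 V | ∃ k : ℕ, e = s(a k, a (k + 1))}).Reachable (a n) v}

section Aux
variable {V : Type*} {T : SimpleGraph V} {a : ℕ → V}

/-- The deleted-edges graph. -/
private abbrev AG (T : SimpleGraph V) (a : ℕ → V) : SimpleGraph V :=
  T.deleteEdges {e : Sym2 V | ∃ k : ℕ, e = s(a k, a (k + 1))}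

lemma arrow_edge_ne (ha : IsArrow T a) {i k : ℕ} (h : i ≠ k) :
    s(a i, a (i+1)) ≠ s(a k, a (k+1)) := by
  intro he
  rw [Sym2.eq_iff] at he
  rcases he with ⟨h1, h2⟩ | ⟨h1, h2⟩
  · exact h (ha.1 h1)
  · have := ha.1 h1; have := ha.1 h2; omega

lemma arrow_dist_le_s9 (hT : T.IsTree) (ha : IsArrow T a) (i k : ℕ) :
    T.dist (a i) (a (i + k)) ≤ k := by
  induction k with
  | zero => simp
  | succ k ih =>
    calc T.dist (a i) (a (i + (k+1))) ≤ T.dist (a i) (a (i+k)) + T.dist (a (i+k)) (a (i+k+1)) :=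
          hT.isConnected.dist_triangle
    _ ≤ k + 1 := by
        have : T.dist (a (i+k)) (a (i+k+1)) = 1 := dist_eq_one_iff_adj.2 (ha.2 (i+k)).1
        omega

lemma natdist_le_arrow_dist (hT : T.IsTree) (ha : IsArrow T a) (i j : ℕ) :
    Nat.dist i j ≤ T.dist (a i) (a j) := by
  have hi := (ha.2 i).2
  have hj := (ha.2 j).2
  have h1 : T.dist (a 0) (a j) ≤ T.dist (a 0) (a i) + T.dist (a i) (a j) :=
    hT.isConnected.dist_triangle
  have h2 : T.dist (a 0) (a i) ≤ T.dist (a 0) (a j) + T.dist (a j) (a i) :=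
    hT.isConnected.dist_triangle
  rw [show T.dist (a j) (a i) = T.dist (a i) (a j) from SimpleGraph.dist_comm] at h2
  simp only [Nat.dist]
  omega

lemma arrow_mem_self (n : ℕ) : a n ∈ arrowComponent T a n := Reachable.refl _

lemma arrow_not_reachable_lt (hT : T.IsTree) (ha : IsArrow T a) {n j : ℕ} (h : n < j) :
    ¬ (AG T a).Reachable (a n) (a j) := by
  intro hr
  have hadj : T.Adj (a n) (a (n+1)) := (ha.2 n).1
  have hbr : T.IsBridge s(a n, a (n+1)) :=
    (isAcyclic_iff_forall_adj_isBridge.1 hT.IsAcyclic) hadj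
  have hnr : ¬ (T.deleteEdges {s(a n, a (n+1))}).Reachable (a n) (a (n+1)) :=
    isBridge_iff.1 hbr
  apply hnr
  have hle : AG T a ≤ T.deleteEdges {s(a n, a (n+1))} := by
    intro x y hxy
    rw [deleteEdges_adj] at hxy ⊢
    exact ⟨hxy.1, fun hh => hxy.2 (by rw [Set.mem_singleton_iff] at hh; exact hh ▸ ⟨n, rfl⟩)⟩
  have h1 : (T.deleteEdges {s(a n, a (n+1))}).Reachable (a n) (a j) := hr.mono hle
  have key : ∀ k, (T.deleteEdges {s(a n, a (n+1))}).Reachable (a (n+1)) (a (n+1+k)) := by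
    intro k
    induction k with
    | zero => exact Reachable.refl _
    | succ k ih =>
      refine ih.trans (Adj.reachable ?_)
      rw [deleteEdges_adj]
      refine ⟨(ha.2 (n+1+k)).1, ?_⟩
      rw [Set.mem_singleton_iff]
      exact arrow_edge_ne ha (show n+1+k ≠ n by omega)
  have h2 := key (j - (n+1))
  rw [show n+1+(j-(n+1)) = j from by omega] at h2
  exact h1.trans h2.symm

/-- The components of distinct arrow vertices are distinct. -/
lemma arrow_not_reachable (hT : T.IsTree) (ha : IsArrow T a) {n j : ℕ} (h : n ≠ j) :
    ¬ (AG T a).Reachable (a n) (a j) := by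
  rcases Nat.lt_or_ge n j with hlt | hge
  · exact arrow_not_reachable_lt hT ha hlt
  · have hlt : j < n := by omega
    exact fun r => arrow_not_reachable_lt hT ha hlt r.symm

lemma arrow_mem_iff (hT : T.IsTree) (ha : IsArrow T a) {n j : ℕ}
    (h : a j ∈ arrowComponent T a n) : j = n := by
  by_contra hne
  exact arrow_not_reachable hT ha (fun hh => hne hh.symm) h

/-- Key walk lemma: a walk ending in the component that avoids `a n` starts in it. -/
lemma walk_avoid (hT : T.IsTree) (ha : IsArrow T a) {n : ℕ} : ∀ {u v : V} (W : T.Walk u v),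
    v ∈ arrowComponent T a n → a n ∉ W.support → u ∈ arrowComponent T a n := by
  intro u v W
  induction W with
  | nil => exact fun hv _ => hv
  | @cons x y z hxy q ih =>
    intro hv hn
    rw [Walk.support_cons, List.mem_cons] at hn
    push_neg at hn
    have hy : y ∈ arrowComponent T a n := ih hv hn.2
    by_cases hS : s(x,y) ∈ {e : Sym2 V | ∃ k : ℕ, e = s(a k, a (k + 1))}
    · exfalso
      obtain ⟨k, hk⟩ := hS
      rw [Sym2.eq_iff] at hk
      have hyn : y = a n := by
        rcases hk with ⟨h1, h2⟩ | ⟨h1, h2⟩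
        · rw [h2]; rw [h2] at hy
          exact congrArg a (arrow_mem_iff hT ha hy)
        · rw [h2]; rw [h2] at hy
          exact congrArg a (arrow_mem_iff hT ha hy)
      exact hn.2 (hyn ▸ q.start_mem_support)
    · have hadj : (AG T a).Adj y x := by
        rw [deleteEdges_adj]
        exact ⟨hxy.symm, fun hh => hS (by rwa [Sym2.eq_swap] at hh)⟩
      exact (show (AG T a).Reachable (a n) y from hy).trans hadj.reachable

/-- Lemma B : `a n` lies on every geodesic from any `a j` to `v ∈ T(aₙ)`. -/
lemma dist_arrow_le (hT : T.IsTree) (ha : IsArrow T a) {n : ℕ} {v : V}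
    (hv : v ∈ arrowComponent T a n) (j : ℕ) :
    T.dist (a n) v ≤ T.dist (a j) v := by
  classical
  rcases eq_or_ne j n with rfl | hne
  · exact le_refl _
  · obtain ⟨W, hW⟩ := (hT.isConnected (a j) v).exists_walk_length_eq_dist
    have hsup : a n ∈ W.support := by
      by_contra hns
      exact hne (arrow_mem_iff hT ha (walk_avoid hT ha W hv hns))
    calc T.dist (a n) v ≤ (W.dropUntil _ hsup).length := dist_le _
    _ ≤ W.length := Walk.length_dropUntil_le W hsup
    _ = T.dist (a j) v := hW

/-- every vertex lies in some component -/
lemma exists_mem_component (hT : T.IsTree) (ha : IsArrow T a) (v : V) :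
    ∃ n, v ∈ arrowComponent T a n := by
  obtain ⟨W⟩ := hT.isConnected (a 0) v
  suffices H : ∀ {u w : V} (_W : T.Walk u w), (∃ n, u ∈ arrowComponent T a n) →
      ∃ n, w ∈ arrowComponent T a n from H W ⟨0, arrow_mem_self 0⟩
  intro u w W
  induction W with
  | nil => exact id
  | @cons x y z hxy q ih =>
    rintro ⟨n, hx⟩
    apply ih
    by_cases hS : s(x,y) ∈ {e : Sym2 V | ∃ k : ℕ, e = s(a k, a (k + 1))}
    · obtain ⟨k, hk⟩ := hS
      rw [Sym2.eq_iff] at hk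
      rcases hk with ⟨h1, h2⟩ | ⟨h1, h2⟩
      · exact ⟨k+1, h2 ▸ arrow_mem_self _⟩
      · exact ⟨k, h2 ▸ arrow_mem_self _⟩
    · have hadj : (AG T a).Adj x y := by rw [deleteEdges_adj]; exact ⟨hxy, hS⟩
      exact ⟨n, (show (AG T a).Reachable (a n) x from hx).trans hadj.reachable⟩

/-- components are disjoint -/
lemma component_unique (hT : T.IsTree) (ha : IsArrow T a) {n j : ℕ} {v : V}
    (h1 : v ∈ arrowComponent T a n) (h2 : v ∈ arrowComponent T a j) : n = j := by
  by_contra hne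
  have r1 : (AG T a).Reachable (a n) v := h1
  have r2 : (AG T a).Reachable (a j) v := h2
  exact arrow_not_reachable hT ha hne (r1.trans r2.symm)

/-- depth bound from cardinality bound -/
lemma depth_le (hT : T.IsTree) {n : ℕ} {t : ℕ} (ht : (arrowComponent T a n).encard ≤ (t : ℕ∞))
    {v : V} (hv : v ∈ arrowComponent T a n) : T.dist (a n) v ≤ t := by
  classical
  have hfin : (arrowComponent T a n).Finite := Set.finite_of_encard_le_coe ht
  obtain ⟨w⟩ := (hv : (AG T a).Reachable (a n) v)
  have hpath : w.bypass.IsPath := w.bypass_isPath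
  set p := w.bypass with hp
  have hsub : ∀ x ∈ p.support, x ∈ arrowComponent T a n := fun x hx =>
    show (AG T a).Reachable (a n) x from ⟨p.takeUntil x hx⟩
  have hnd := hpath.support_nodup
  have hc1 : p.support.toFinset.card = p.support.length := List.toFinset_card_of_nodup hnd
  have hss : p.support.toFinset ⊆ hfin.toFinset := by
    intro x hx
    rw [Set.Finite.mem_toFinset]
    exact hsub x (List.mem_toFinset.1 hx)
  have hc2 := Finset.card_le_card hss
  have hen : (hfin.toFinset.card : ℕ∞) ≤ (t : ℕ∞) := by
    rw [← Set.encard_coe_eq_coe_finsetCard, Set.Finite.coe_toFinset]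
    exact ht
  have hc3 : hfin.toFinset.card ≤ t := by exact_mod_cast hen
  have hlen := p.length_support
  have hdist : T.dist (a n) v ≤ p.length := by
    have := dist_le (p.mapLe (T.deleteEdges_le _))
    rwa [Walk.length_map] at this
  omega


lemma forward_depth (hT : T.IsTree) (ha : IsArrow T a) (f : V ≃ ℕ) (m m' : ℕ)
    (hf : ∀ u v : V, Nat.dist (f u) (f v) ≤ m * T.dist u v)
    (hg : ∀ u v : V, T.dist u v ≤ m' * Nat.dist (f u) (f v))
    {n : ℕ} {v : V} (hv : v ∈ arrowComponent T a n) :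
    T.dist (a n) v ≤ m * m' + m' * f (a 0) := by
  by_cases hvn : v = a n
  · subst hvn
    rw [SimpleGraph.dist_self]
    exact Nat.zero_le _
  have hlb := dist_arrow_le hT ha hv
  have hpc : f v ≠ f (a n) := fun h => hvn (f.injective h)
  have hstep : ∀ i : ℕ, f (a (i+1)) ≤ f (a i) + m ∧ f (a i) ≤ f (a (i+1)) + m := by
    intro i
    have h1 : T.dist (a i) (a (i+1)) = 1 := dist_eq_one_iff_adj.2 (ha.2 i).1
    have h2 := hf (a i) (a (i+1))
    rw [h1, mul_one] at h2
    simp only [Nat.dist] at h2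
    omega
  rcases Nat.lt_or_ge (f (a n)) (f v) with hp | hp
  · -- upward crossing
    have hex : ∃ k, f v ≤ f (a (n + k)) := by
      refine ⟨m' * (f (a 0) + f v) + 1, ?_⟩
      by_contra hlt
      push_neg at hlt
      set K := m' * (f (a 0) + f v) + 1 with hK
      have hd := (ha.2 (n + K)).2
      have h2 := hg (a 0) (a (n + K))
      rw [hd] at h2
      have h3 : Nat.dist (f (a 0)) (f (a (n + K))) ≤ f (a 0) + f v := by
        simp only [Nat.dist]; omega
      have h4 : m' * Nat.dist (f (a 0)) (f (a (n + K))) ≤ m' * (f (a 0) + f v) :=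
        Nat.mul_le_mul_left m' h3
      omega
    set k := Nat.find hex with hkdef
    have hk1 : f v ≤ f (a (n+k)) := Nat.find_spec hex
    have hk0 : k ≠ 0 := by
      intro h0
      rw [hkdef] at h0
      have := Nat.find_spec hex
      rw [h0, Nat.add_zero] at this
      omega
    have hkm : ¬ f v ≤ f (a (n+(k-1))) := Nat.find_min hex (by omega)
    have hstep' := (hstep (n+(k-1))).1
    rw [show n+(k-1)+1 = n+k from by omega] at hstep'
    have hclose : Nat.dist (f v) (f (a (n+k))) ≤ m := by
      simp only [Nat.dist]; omega
    have h5 := hg v (a (n+k))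
    have h6 : m' * Nat.dist (f v) (f (a (n+k))) ≤ m' * m := Nat.mul_le_mul_left m' hclose
    have h7 := hlb (n+k)
    rw [show T.dist (a (n+k)) v = T.dist v (a (n+k)) from SimpleGraph.dist_comm] at h7
    have : m' * m = m * m' := Nat.mul_comm m' m
    omega
  · -- f v < f (a n)
    have hp' : f v < f (a n) := by omega
    rcases Nat.lt_or_ge (f v) (f (a 0)) with hc0 | hc0
    · have h1 := hg (a 0) v
      have h2 := hlb 0
      have h3 : Nat.dist (f (a 0)) (f v) ≤ f (a 0) := by
        simp only [Nat.dist]; omega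
      have h4 : m' * Nat.dist (f (a 0)) (f v) ≤ m' * f (a 0) := Nat.mul_le_mul_left m' h3
      omega
    · have hex : ∃ k, k ≤ n ∧ f (a (n-k)) ≤ f v := ⟨n, le_refl n, by simpa using hc0⟩
      set k := Nat.find hex with hkdef
      obtain ⟨hkn, hk1⟩ : k ≤ n ∧ f (a (n-k)) ≤ f v := Nat.find_spec hex
      have hk0 : k ≠ 0 := by
        intro h0
        rw [hkdef] at h0
        obtain ⟨-, hh⟩ := Nat.find_spec hex
        rw [h0, Nat.sub_zero] at hh
        omega
      have hkm : ¬ ((k-1) ≤ n ∧ f (a (n-(k-1))) ≤ f v) := Nat.find_min hex (by omega)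
      have hkm' : f v < f (a (n-(k-1))) := by
        rcases Nat.lt_or_ge (f v) (f (a (n-(k-1)))) with h | h
        · exact h
        · exact absurd ⟨by omega, h⟩ hkm
      have hstep' := (hstep (n-k)).1
      rw [show n-k+1 = n-(k-1) from by omega] at hstep'
      have hclose : Nat.dist (f v) (f (a (n-k))) ≤ m := by
        simp only [Nat.dist]; omega
      have h5 := hg v (a (n-k))
      have h6 : m' * Nat.dist (f v) (f (a (n-k))) ≤ m' * m := Nat.mul_le_mul_left m' hclose
      have h7 := hlb (n-k)
      rw [show T.dist (a (n-k)) v = T.dist v (a (n-k)) from SimpleGraph.dist_comm] at h7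
      have : m' * m = m * m' := Nat.mul_comm m' m
      omega

lemma forward_encard (hT : T.IsTree) (ha : IsArrow T a) (f : V ≃ ℕ) (m m' : ℕ)
    (hf : ∀ u v : V, Nat.dist (f u) (f v) ≤ m * T.dist u v)
    (hg : ∀ u v : V, T.dist u v ≤ m' * Nat.dist (f u) (f v)) (n : ℕ) :
    (arrowComponent T a n).encard ≤ ((2*m*(m*m'+m'*f (a 0))+1 : ℕ) : ℕ∞) := by
  set R := m*m'+m'*f (a 0) with hR
  have himg : f '' arrowComponent T a n ⊆
      ↑(Finset.Icc (f (a n) - m*R) (f (a n) + m*R)) := by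
    rintro _ ⟨v, hv, rfl⟩
    simp only [Finset.coe_Icc, Set.mem_Icc]
    have hd := forward_depth hT ha f m m' hf hg hv
    have h1 := hf (a n) v
    have h2 : m * T.dist (a n) v ≤ m * R := Nat.mul_le_mul_left m hd
    have h3 : Nat.dist (f (a n)) (f v) ≤ m * R := le_trans h1 h2
    simp only [Nat.dist] at h3
    omega
  calc (arrowComponent T a n).encard = (f '' arrowComponent T a n).encard :=
        (Set.InjOn.encard_image (f.injective.injOn)).symm
  _ ≤ (↑(Finset.Icc (f (a n) - m*R) (f (a n) + m*R)) : Set ℕ).encard :=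
        Set.encard_le_encard himg
  _ = ((Finset.Icc (f (a n) - m*R) (f (a n) + m*R)).card : ℕ∞) :=
        Set.encard_coe_eq_coe_finsetCard _
  _ ≤ ((2*m*R+1 : ℕ) : ℕ∞) := by
        rw [Nat.cast_le, Nat.card_Icc]
        have h2 : 2*m*R = m*R + m*R := by ring
        omega


lemma backward (hT : T.IsTree) (ha : IsArrow T a) (t : ℕ)
    (ht : ∀ n, (arrowComponent T a n).encard ≤ (t : ℕ∞)) : IsAsymptoticRay T := by
  classical
  have hfin : ∀ n, (arrowComponent T a n).Finite := fun n =>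
    Set.finite_of_encard_le_coe (ht n)
  set C : ℕ → Finset V := fun n => (hfin n).toFinset with hC
  have hmemC : ∀ n (v : V), v ∈ C n ↔ v ∈ arrowComponent T a n := fun n v =>
    Set.Finite.mem_toFinset _
  have hcle : ∀ n, (C n).card ≤ t := by
    intro n
    have h1 : (((C n).card : ℕ) : ℕ∞) ≤ (t : ℕ∞) := by
      rw [← Set.encard_coe_eq_coe_finsetCard]
      simp only [hC, Set.Finite.coe_toFinset]
      exact ht n
    exact_mod_cast h1
  have hcpos : ∀ n, 1 ≤ (C n).card := fun n =>
    Finset.card_pos.2 ⟨a n, (hmemC n _).2 (arrow_mem_self n)⟩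
  -- choose the component index of each vertex
  choose g hg using exists_mem_component hT ha (a := a)
  have hgeq : ∀ {n : ℕ} {v : V}, v ∈ arrowComponent T a n → g v = n := fun {n v} h =>
    component_unique hT ha (hg v) h
  have hdiam : ∀ v : V, T.dist (a (g v)) v ≤ t := fun v => depth_le hT (ht (g v)) (hg v)
  -- partial sums
  set N : ℕ → ℕ := fun n => ∑ k ∈ Finset.range n, (C k).card with hN
  have hNsucc : ∀ n, N (n+1) = N n + (C n).card := fun n => Finset.sum_range_succ _ n
  have hNzero : N 0 = 0 := Finset.sum_range_zero _
  have hNmono : ∀ i j, i ≤ j → N i + (j - i) ≤ N j := by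
    intro i j hij
    induction j with
    | zero =>
      have h0 : i = 0 := by omega
      subst h0
      omega
    | succ j ihj =>
      rcases Nat.lt_or_ge i (j+1) with h | h
      · have h1 := ihj (by omega)
        have h2 := hNsucc j
        have h3 := hcpos j
        omega
      · have h0 : i = j + 1 := by omega
        subst h0
        omega
  have hNle : ∀ i j, i ≤ j → N j ≤ N i + t * (j - i) := by
    intro i j hij
    induction j with
    | zero => omega
    | succ j ihj =>
      rcases Nat.lt_or_ge i (j+1) with h | h
      · have h1 := ihj (by omega)
        have h2 := hNsucc j
        have h3 := hcle j
        have h4 : t * (j + 1 - i) = t * (j - i) + t := by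
          rw [show j + 1 - i = (j - i) + 1 from by omega]
          ring
        omega
      · have h0 : i = j + 1 := by omega
        subst h0
        omega
  -- enumeration within components
  set idx : ℕ → V → ℕ := fun n v =>
    if h : v ∈ C n then ((Fintype.equivFinOfCardEq (Fintype.card_coe (C n)) ⟨v, h⟩ : Fin _) : ℕ)
    else 0 with hidx
  have hidxlt : ∀ n (v : V), v ∈ C n → idx n v < (C n).card := by
    intro n v hv
    simp only [hidx, dif_pos hv]
    exact (Fintype.equivFinOfCardEq (Fintype.card_coe (C n)) ⟨v, hv⟩).isLt
  have hidxinj : ∀ n (u v : V), u ∈ C n → v ∈ C n → idx n u = idx n v → u = v := by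
    intro n u v hu hv h
    simp only [hidx, dif_pos hu, dif_pos hv] at h
    have h2 := (Fintype.equivFinOfCardEq (Fintype.card_coe (C n))).injective (Fin.ext h)
    exact congrArg Subtype.val h2
  have hidxsurj : ∀ n i, i < (C n).card → ∃ v ∈ C n, idx n v = i := by
    intro n i hi
    set x := (Fintype.equivFinOfCardEq (Fintype.card_coe (C n))).symm ⟨i, hi⟩ with hx
    refine ⟨x.1, x.2, ?_⟩
    simp only [hidx, dif_pos x.2]
    have h2 : (Fintype.equivFinOfCardEq (Fintype.card_coe (C n))) x = ⟨i, hi⟩ :=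
      (Fintype.equivFinOfCardEq (Fintype.card_coe (C n))).apply_symm_apply ⟨i, hi⟩
    rw [show (⟨x.1, x.2⟩ : {y // y ∈ C n}) = x from rfl, h2]
  -- the bijection
  set F : V → ℕ := fun v => N (g v) + idx (g v) v with hF
  have hFlow : ∀ v : V, N (g v) ≤ F v := fun v => Nat.le_add_right _ _
  have hFhigh : ∀ v : V, F v < N (g v + 1) := by
    intro v
    have h1 := hidxlt (g v) v ((hmemC _ _).2 (hg v))
    have h2 := hNsucc (g v)
    simp only [hF]
    omega
  have hFinj : Function.Injective F := by
    intro u v huv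
    have hgg : g u = g v := by
      by_contra hne
      rcases Nat.lt_or_ge (g u) (g v) with h | h
      · have h1 := hFhigh u
        have h2 := hFlow v
        have h3 := hNmono (g u + 1) (g v) (by omega)
        omega
      · have h1 := hFhigh v
        have h2 := hFlow u
        have h3 := hNmono (g v + 1) (g u) (by omega)
        omega
    simp only [hF, hgg] at huv
    exact hidxinj (g v) u v (by rw [← hgg]; exact (hmemC _ _).2 (hg u))
      ((hmemC _ _).2 (hg v)) (by omega)
  have hFsurj : Function.Surjective F := by
    intro i
    have hex : ∃ n, i < N (n+1) := by
      refine ⟨i, ?_⟩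
      have := hNmono 0 (i+1) (by omega)
      omega
    set n := Nat.find hex with hndef
    have hn2 : i < N (n+1) := Nat.find_spec hex
    have hn1 : N n ≤ i := by
      rcases Nat.eq_zero_or_pos n with h0 | h0
      · rw [h0, hNzero]; omega
      · have hmin := Nat.find_min hex (show n - 1 < n by omega)
        push_neg at hmin
        rw [show n-1+1 = n from by omega] at hmin
        exact hmin
    have hi : i - N n < (C n).card := by
      have := hNsucc n
      omega
    obtain ⟨v, hv, hidxv⟩ := hidxsurj n _ hi
    have hgv : g v = n := hgeq ((hmemC n v).1 hv)
    refine ⟨v, ?_⟩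
    simp only [hF, hgv, hidxv]
    omega
  -- the two estimates
  have E1 : ∀ u v : V, Nat.dist (F u) (F v) ≤ t*(2*t+2) * T.dist u v := by
    suffices H : ∀ u v : V, g u ≤ g v → Nat.dist (F u) (F v) ≤ t*(2*t+2) * T.dist u v by
      intro u v
      rcases le_total (g u) (g v) with h | h
      · exact H u v h
      · rw [Nat.dist_comm, SimpleGraph.dist_comm]
        exact H v u h
    intro u v hle
    rcases eq_or_ne u v with rfl | hne
    · simp [Nat.dist]
    have hd1 : 1 ≤ T.dist u v := hT.isConnected.pos_dist_of_ne hne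
    have hu1 := hFlow u
    have hu2 := hFhigh u
    have hv1 := hFlow v
    have hv2 := hFhigh v
    have hNled : N (g v + 1) ≤ N (g u) + t * (g v + 1 - g u) := hNle _ _ (by omega)
    have hNm := hNmono (g u) (g v) hle
    have hNm2 := hNmono (g u + 1) (g v + 1) (by omega)
    have hnd : Nat.dist (F u) (F v) ≤ t * (g v + 1 - g u) := by
      simp only [Nat.dist]
      omega
    have h1 : Nat.dist (g u) (g v) ≤ T.dist (a (g u)) (a (g v)) :=
      natdist_le_arrow_dist hT ha _ _
    have h2 : T.dist (a (g u)) (a (g v)) ≤ T.dist (a (g u)) u + T.dist u (a (g v)) :=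
      hT.isConnected.dist_triangle
    have h3 : T.dist u (a (g v)) ≤ T.dist u v + T.dist v (a (g v)) :=
      hT.isConnected.dist_triangle
    have h4 : T.dist (a (g u)) u ≤ t := hdiam u
    have h5 : T.dist v (a (g v)) ≤ t := by
      rw [show T.dist v (a (g v)) = T.dist (a (g v)) v from SimpleGraph.dist_comm]
      exact hdiam v
    have h6 : g v - g u ≤ T.dist u v + 2*t := by
      simp only [Nat.dist] at h1
      omega
    have h7 : g v + 1 - g u ≤ T.dist u v + 2*t + 1 := by omega
    calc Nat.dist (F u) (F v) ≤ t * (g v + 1 - g u) := hnd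
    _ ≤ t * (T.dist u v + 2*t+1) := Nat.mul_le_mul_left t h7
    _ ≤ t*(2*t+2) * T.dist u v := by
        have hr1 : t * (T.dist u v + 2*t + 1) = t * T.dist u v + t*(2*t+1) := by ring
        have hr2 : t*(2*t+2) * T.dist u v = t * T.dist u v + t*(2*t+1) * T.dist u v := by ring
        have hr3 : t*(2*t+1) * 1 ≤ t*(2*t+1) * T.dist u v := Nat.mul_le_mul_left _ hd1
        omega
  have E2 : ∀ u v : V, T.dist u v ≤ (2*t+1) * Nat.dist (F u) (F v) := by
    suffices H : ∀ u v : V, g u ≤ g v → T.dist u v ≤ (2*t+1) * Nat.dist (F u) (F v) by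
      intro u v
      rcases le_total (g u) (g v) with h | h
      · exact H u v h
      · rw [Nat.dist_comm, SimpleGraph.dist_comm]
        exact H v u h
    intro u v hle
    rcases eq_or_ne u v with rfl | hne
    · simp [SimpleGraph.dist_self]
    have hFne : F u ≠ F v := fun h => hne (hFinj h)
    have hnd1 : 1 ≤ Nat.dist (F u) (F v) := by
      simp only [Nat.dist]
      omega
    have h4 : T.dist u (a (g u)) ≤ t := by
      rw [show T.dist u (a (g u)) = T.dist (a (g u)) u from SimpleGraph.dist_comm]
      exact hdiam u
    have h5 : T.dist (a (g v)) v ≤ t := hdiam v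
    rcases eq_or_ne (g u) (g v) with hgg | hgg
    · have htri : T.dist u v ≤ T.dist u (a (g u)) + T.dist (a (g u)) v :=
        hT.isConnected.dist_triangle
      rw [hgg] at htri
      have h6 : T.dist u v ≤ 2*t := by
        rw [← hgg] at htri
        have h5' : T.dist (a (g u)) v ≤ t := by rw [hgg]; exact h5
        omega
      calc T.dist u v ≤ 2*t := h6
      _ ≤ (2*t+1) * 1 := by omega
      _ ≤ (2*t+1) * Nat.dist (F u) (F v) := Nat.mul_le_mul_left _ hnd1
    · have hlt : g u < g v := by omega
      have hu2 := hFhigh u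
      have hv1 := hFlow v
      have hmono := hNmono (g u + 1) (g v) (by omega)
      have hnd2 : g v - g u ≤ Nat.dist (F u) (F v) := by
        simp only [Nat.dist]
        omega
      have harr : T.dist (a (g u)) (a (g v)) ≤ g v - g u := by
        have h := arrow_dist_le_s9 hT ha (g u) (g v - g u)
        rw [show g u + (g v - g u) = g v from by omega] at h
        exact h
      have htri1 : T.dist u v ≤ T.dist u (a (g u)) + T.dist (a (g u)) v :=
        hT.isConnected.dist_triangle
      have htri2 : T.dist (a (g u)) v ≤ T.dist (a (g u)) (a (g v)) + T.dist (a (g v)) v :=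
        hT.isConnected.dist_triangle
      have h8 : T.dist u v ≤ 2*t + (g v - g u) := by omega
      calc T.dist u v ≤ 2*t + (g v - g u) := h8
      _ ≤ (2*t+1) * Nat.dist (F u) (F v) := by
          have hr1 : (2*t+1) * Nat.dist (F u) (F v)
              = 2*t * Nat.dist (F u) (F v) + Nat.dist (F u) (F v) := by ring
          have hr2 : 2*t * 1 ≤ 2*t * Nat.dist (F u) (F v) := Nat.mul_le_mul_left _ hnd1
          omega
  -- assemble
  refine ⟨Equiv.ofBijective F ⟨hFinj, hFsurj⟩, t*(2*t+2), 2*t+1, ?_, ?_⟩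
  · exact E1
  · intro i j
    have h := E2 ((Equiv.ofBijective F ⟨hFinj, hFsurj⟩).symm i)
      ((Equiv.ofBijective F ⟨hFinj, hFsurj⟩).symm j)
    have h1 : F ((Equiv.ofBijective F ⟨hFinj, hFsurj⟩).symm i) = i :=
      (Equiv.ofBijective F ⟨hFinj, hFsurj⟩).apply_symm_apply i
    have h2 : F ((Equiv.ofBijective F ⟨hFinj, hFsurj⟩).symm j) = j :=
      (Equiv.ofBijective F ⟨hFinj, hFsurj⟩).apply_symm_apply j
    rwa [h1, h2] at h

end Aux

/-- An infinite tree `T` with degrees bounded by `s` and an arrow `(aₙ)` is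
an asymptotic ray iff the components `T(aₙ)` obtained by deleting the arrow's edges have
uniformly bounded numbers of vertices. -/
theorem tree_asymptoticRay_iff {V : Type*} [Infinite V] (T : SimpleGraph V)
    (hT : T.IsTree) (s : ℕ) (hdeg : ∀ v : V, (T.neighborSet v).encard ≤ (s : ℕ∞))
    (a : ℕ → V) (ha : IsArrow T a) :
    IsAsymptoticRay T ↔ ∃ t : ℕ, ∀ n : ℕ, (arrowComponent T a n).encard ≤ (t : ℕ∞) := by
  constructor
  · rintro ⟨f, m, m', hf, hg'⟩
    have hg : ∀ u v : V, T.dist u v ≤ m' * Nat.dist (f u) (f v) := by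
      intro u v
      have h := hg' (f u) (f v)
      rwa [Equiv.symm_apply_apply, Equiv.symm_apply_apply] at h
    exact ⟨2*m*(m*m'+m'*f (a 0))+1, fun n => forward_encard hT ha f m m' hf hg n⟩
  · rintro ⟨t, ht⟩
    exact backward hT ha t ht
end

section
/- Let T = (V,E) be an infinite tree (connected acyclic simple graph) with path metric d, let s be a natural number such that ρ(v) ≤ s for all v ∈ V, let (aₙ)ₙ∈ℕ be an arrow in T, and suppose T is an asymptotic ray. Then there exists a natural number t such that the connected component T(aₙ) of aₙ in the graph obtained from T by deleting all edges (aₖ, a_{k+1}), k ∈ ℕ, has at most t vertices, for every n ∈ ℕ. -/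
section Aux

variable {V : Type*} {T : SimpleGraph V} {a : ℕ → V}

lemma mem_arrowComponent_iff {n : ℕ} {v : V} :
    v ∈ arrowComponent T a n ↔
      (T.deleteEdges {e : Sym2 V | ∃ k : ℕ, e = s(a k, a (k + 1))}).Reachable (a n) v :=
  Iff.rfl

/-- Existence of the "arrow walk" from `a i` to `a (i+d)`, which is a path all of whose
edges are arrow edges. -/
lemma arrow_walk_exists (ha : IsArrow T a) :
    ∀ d i : ℕ, ∃ W : T.Walk (a i) (a (i + d)), W.length = d ∧ W.IsPath ∧
      (∀ v ∈ W.support, ∃ t, i ≤ t ∧ t ≤ i + d ∧ v = a t) ∧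
      (∀ e ∈ W.edges, ∃ k, e = s(a k, a (k + 1))) := by
  intro d
  induction d with
  | zero =>
    intro i
    refine ⟨SimpleGraph.Walk.nil, rfl, SimpleGraph.Walk.IsPath.nil, ?_, ?_⟩
    · intro v hv
      simp only [SimpleGraph.Walk.support_nil, List.mem_singleton] at hv
      exact ⟨i, le_rfl, by omega, hv⟩
    · intro e he
      simp at he
  | succ d ihd =>
    intro i
    obtain ⟨W', hlen, hpath, hsupp, hedges⟩ := ihd (i + 1)
    have hcast : a (i + 1 + d) = a (i + (d + 1)) := by congr 1; omega
    refine ⟨SimpleGraph.Walk.cons (ha.2 i).1 (W'.copy rfl hcast), ?_, ?_, ?_, ?_⟩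
    · simp [hlen]
    · rw [SimpleGraph.Walk.cons_isPath_iff]
      refine ⟨(SimpleGraph.Walk.isPath_copy _ _ _).2 hpath, ?_⟩
      intro hmem
      rw [SimpleGraph.Walk.support_copy] at hmem
      obtain ⟨t, ht1, _, ht3⟩ := hsupp _ hmem
      have : i = t := ha.1 ht3
      omega
    · intro v hv
      rw [SimpleGraph.Walk.support_cons, SimpleGraph.Walk.support_copy] at hv
      rcases List.mem_cons.1 hv with h | h
      · exact ⟨i, le_rfl, by omega, h⟩
      · obtain ⟨t, ht1, ht2, ht3⟩ := hsupp _ h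
        exact ⟨t, by omega, by omega, ht3⟩
    · intro e he
      rw [SimpleGraph.Walk.edges_cons, SimpleGraph.Walk.edges_copy] at he
      rcases List.mem_cons.1 he with h | h
      · exact ⟨i, h⟩
      · exact hedges _ h

/-- Distinct arrow vertices are not reachable once arrow edges are deleted. -/
lemma arrow_reach_eq (hT : T.IsTree) (ha : IsArrow T a) {n k : ℕ}
    (h : (T.deleteEdges {e : Sym2 V | ∃ k : ℕ, e = s(a k, a (k + 1))}).Reachable
      (a n) (a k)) : n = k := by
  have aux : ∀ i d : ℕ, 0 < d →
      ¬ (T.deleteEdges {e : Sym2 V | ∃ k : ℕ, e = s(a k, a (k + 1))}).Reachable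
        (a i) (a (i + d)) := by
    intro i d hd hreach
    classical
    obtain ⟨W⟩ := hreach
    have hsub : ∀ e ∈ W.toPath.val.edges, e ∈ T.edgeSet := by
      intro e he
      have := W.toPath.val.edges_subset_edgeSet he
      rw [SimpleGraph.edgeSet_deleteEdges] at this
      exact this.1
    have hq : (W.toPath.val.transfer T hsub).IsPath := W.toPath.prop.transfer hsub
    obtain ⟨W₀, hlen, hpath, _, hedges⟩ := arrow_walk_exists ha d i
    have hEq : W.toPath.val.transfer T hsub = W₀ :=
      Subtype.ext_iff.mp (hT.IsAcyclic.path_unique ⟨_, hq⟩ ⟨W₀, hpath⟩)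
    have hlenpos : 0 < W₀.edges.length := by
      rw [SimpleGraph.Walk.length_edges, hlen]; exact hd
    obtain ⟨e, he⟩ := List.exists_mem_of_length_pos hlenpos
    have heEs : ∃ k, e = s(a k, a (k + 1)) := hedges e he
    have heW : e ∈ W.toPath.val.edges := by
      rw [← SimpleGraph.Walk.edges_transfer _ hsub, hEq]; exact he
    have hG' := W.toPath.val.edges_subset_edgeSet heW
    rw [SimpleGraph.edgeSet_deleteEdges] at hG'
    exact hG'.2 heEs
  rcases lt_trichotomy n k with hlt | heq | hlt
  · have hk : a k = a (n + (k - n)) := by congr 1; omega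
    rw [hk] at h
    exact absurd h (aux n (k - n) (by omega))
  · exact heq
  · have hk : a n = a (k + (n - k)) := by congr 1; omega
    rw [hk] at h
    exact absurd h.symm (aux k (n - k) (by omega))

/-- Any walk from inside a component to outside passes through `a n`. -/
lemma walk_passes (hT : T.IsTree) (ha : IsArrow T a) {n : ℕ} :
    ∀ {w u : V} (W : T.Walk w u), w ∈ arrowComponent T a n →
      u ∉ arrowComponent T a n → a n ∈ W.support := by
  intro w u W
  induction W with
  | nil => intro hw hu; exact absurd hw hu
  | @cons w x u hadj W ih =>
    intro hw hu
    by_cases hx : x ∈ arrowComponent T a n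
    · rw [SimpleGraph.Walk.support_cons]
      exact List.mem_cons_of_mem _ (ih hx hu)
    · have hEs : s(w, x) ∈ {e : Sym2 V | ∃ k : ℕ, e = s(a k, a (k + 1))} := by
        by_contra hnot
        refine hx (hw.trans (SimpleGraph.Adj.reachable ?_))
        rw [SimpleGraph.deleteEdges_adj]
        exact ⟨hadj, hnot⟩
      obtain ⟨k, hk⟩ := hEs
      have hwk : w = a k ∨ w = a (k + 1) := by
        rw [Sym2.eq_iff] at hk; tauto
      have hwn : w = a n := by
        rcases hwk with h1 | h1
        · rw [h1] at hw
          have := arrow_reach_eq hT ha hw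
          rw [h1, ← this]
        · rw [h1] at hw
          have := arrow_reach_eq hT ha hw
          rw [h1, ← this]
      rw [SimpleGraph.Walk.support_cons, hwn]
      exact List.mem_cons_self

/-- If `w` is in the component of `a n` and `u` is outside, then
`d(a n, w) ≤ d(w, u)`. -/
lemma dist_le_outside (hT : T.IsTree) (ha : IsArrow T a) {n : ℕ} {w u : V}
    (hw : w ∈ arrowComponent T a n) (hu : u ∉ arrowComponent T a n) :
    T.dist (a n) w ≤ T.dist w u := by
  classical
  obtain ⟨W, hW⟩ := (hT.isConnected.preconnected w u).exists_walk_length_eq_dist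
  have hp := walk_passes hT ha W hw hu
  calc T.dist (a n) w = T.dist w (a n) := SimpleGraph.dist_comm
    _ ≤ (W.takeUntil (a n) hp).length := SimpleGraph.dist_le _
    _ ≤ W.length := SimpleGraph.Walk.length_takeUntil_le W hp
    _ = T.dist w u := hW

end Aux

/-- If an infinite tree `T` with degrees bounded by `s` carrying an arrow
`(aₙ)` is an asymptotic ray, then the components `T(aₙ)` obtained by deleting the arrow's
edges have uniformly bounded numbers of vertices. -/
theorem tree_components_bounded_of_asymptoticRay {V : Type*} [Infinite V]
    (T : SimpleGraph V) (hT : T.IsTree) (s : ℕ)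
    (hdeg : ∀ v : V, (T.neighborSet v).encard ≤ (s : ℕ∞))
    (a : ℕ → V) (ha : IsArrow T a) (hray : IsAsymptoticRay T) :
    ∃ t : ℕ, ∀ n : ℕ, (arrowComponent T a n).encard ≤ (t : ℕ∞) := by
  classical
  obtain ⟨f, m, m', h1, h2⟩ := hray
  set M := m + 1 with hM
  set M' := m' + 1 with hM'
  have h1' : ∀ u v : V, Nat.dist (f u) (f v) ≤ M * T.dist u v := fun u v =>
    le_trans (h1 u v) (Nat.mul_le_mul_right _ (by omega))
  have h2' : ∀ u v : V, T.dist u v ≤ M' * Nat.dist (f u) (f v) := by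
    intro u v
    have := h2 (f u) (f v)
    rw [f.symm_apply_apply, f.symm_apply_apply] at this
    exact le_trans this (Nat.mul_le_mul_right _ (by omega))
  set c := f (a 0) with hc
  set C := M' * (c + M + 2) with hC
  -- the key depth bound
  have depth : ∀ n : ℕ, ∀ v ∈ arrowComponent T a n, T.dist (a n) v ≤ C := by
    intro n v hv
    by_contra hcon
    push_neg at hcon
    set D := T.dist (a n) v with hD
    set r := (D - 1) / M' with hr
    have hMr : M' * r ≤ D - 1 := by
      rw [hr, Nat.mul_comm]; exact Nat.div_mul_le_self _ _
    have hr2 : c + M + 2 ≤ r := by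
      rw [hr, Nat.le_div_iff_mul_le (by omega : 0 < M'), Nat.mul_comm]
      omega
    have outside : ∀ u, u ∉ arrowComponent T a n → D ≤ T.dist v u := by
      intro u hu
      have := dist_le_outside hT ha hv hu
      omega
    have dist0 : D ≤ T.dist (a 0) v := by
      by_cases hn : n = 0
      · rw [hD, hn]
      · have h0 : a 0 ∉ arrowComponent T a n := by
          intro hmem
          exact hn (arrow_reach_eq hT ha hmem)
        have := outside _ h0
        rw [SimpleGraph.dist_comm] at this
        exact this
    set p := f v with hp
    by_cases hcase : ∀ k, p ≤ f (a k) + r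
    · -- Case 1: the whole arrow maps above p - r; then p is small and v is close to a 0.
      have h0 : p ≤ c + r := hcase 0
      have hdv : T.dist (a 0) v ≤ M' * Nat.dist c p := h2' (a 0) v
      have hdist : Nat.dist c p = (c - p) + (p - c) := by simp [Nat.dist]
      rcases le_total p c with hpc | hpc
      · have : Nat.dist c p ≤ c := by omega
        have : M' * Nat.dist c p ≤ M' * c := Nat.mul_le_mul_left _ this
        have hMc : M' * c ≤ C := by rw [hC]; exact Nat.mul_le_mul_left _ (by omega)
        omega
      · have : Nat.dist c p ≤ r := by omega
        have : M' * Nat.dist c p ≤ M' * r := Nat.mul_le_mul_left _ this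
        omega
    · push_neg at hcase
      obtain ⟨k₀, hk₀⟩ := hcase
      set k₁ := max (k₀ + 1) (M' * (c + p + r + 1)) with hk₁def
      have hk₁ : p + r + 1 ≤ f (a k₁) := by
        have e1 : T.dist (a 0) (a k₁) = k₁ := (ha.2 k₁).2
        have e2 : T.dist (a 0) (a k₁) ≤ M' * Nat.dist c (f (a k₁)) := h2' (a 0) (a k₁)
        have e3 : Nat.dist c (f (a k₁)) ≤ c + f (a k₁) := by simp [Nat.dist]; omega
        have e4 : M' * (c + p + r + 1) ≤ k₁ := le_max_right _ _
        have e5 : M' * (c + p + r + 1) ≤ M' * (c + f (a k₁)) := by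
          calc M' * (c + p + r + 1) ≤ k₁ := e4
            _ = T.dist (a 0) (a k₁) := e1.symm
            _ ≤ M' * Nat.dist c (f (a k₁)) := e2
            _ ≤ M' * (c + f (a k₁)) := Nat.mul_le_mul_left _ e3
        have := Nat.le_of_mul_le_mul_left e5 (by omega : 0 < M')
        omega
      have hP1 : k₀ < k₁ ∧ p ≤ f (a k₁) + r :=
        ⟨lt_of_lt_of_le (Nat.lt_succ_self _) (le_max_left _ _), by omega⟩
      obtain ⟨ks, hks1, hks2, hprev⟩ :
          ∃ k, 0 < k ∧ p ≤ f (a k) + r ∧ f (a (k - 1)) + r < p := by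
        have hex : ∃ k, k₀ < k ∧ p ≤ f (a k) + r := ⟨k₁, hP1⟩
        have hspec1 := (Nat.find_spec hex).1
        refine ⟨Nat.find hex, by omega, (Nat.find_spec hex).2, ?_⟩
        by_cases hcp : Nat.find hex - 1 = k₀
        · rw [hcp]; exact hk₀
        · have hlt : Nat.find hex - 1 < Nat.find hex := by omega
          have hmin := Nat.find_min hex hlt
          rw [not_and_or] at hmin
          rcases hmin with hmin | hmin
          · omega
          · omega
      -- the step from ks - 1 to ks is small
      have hadj : T.Adj (a (ks - 1)) (a ks) := by
        have := (ha.2 (ks - 1)).1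
        have e : ks - 1 + 1 = ks := by omega
        rwa [e] at this
      have hdistadj : T.dist (a (ks - 1)) (a ks) ≤ 1 := by
        have := SimpleGraph.dist_le (SimpleGraph.Walk.cons hadj SimpleGraph.Walk.nil)
        simpa using this
      have hstep : Nat.dist (f (a (ks - 1))) (f (a ks)) ≤ M :=
        le_trans (h1' _ _) (by
          calc M * T.dist (a (ks - 1)) (a ks) ≤ M * 1 := Nat.mul_le_mul_left _ hdistadj
            _ = M := by omega)
      have hstep' : Nat.dist (f (a (ks - 1))) (f (a ks)) =
          (f (a (ks - 1)) - f (a ks)) + (f (a ks) - f (a (ks - 1))) := by simp [Nat.dist]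
      have hquote : Nat.dist p (f (a ks)) ≤ r := by
        have hMler : M ≤ r := by omega
        have : Nat.dist p (f (a ks)) = (p - f (a ks)) + (f (a ks) - p) := by simp [Nat.dist]
        omega
      have hdva : T.dist v (a ks) ≤ M' * r := by
        have h7 := h2' v (a ks)
        rw [← hp] at h7
        have h6 : M' * Nat.dist p (f (a ks)) ≤ M' * r := Nat.mul_le_mul_left _ hquote
        omega
      by_cases hkn : ks = n
      · rw [hkn] at hdva
        rw [SimpleGraph.dist_comm] at hdva
        omega
      · have hout : a ks ∉ arrowComponent T a n := by
          intro hmem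
          exact hkn (arrow_reach_eq hT ha hmem).symm
        have := outside _ hout
        omega
  -- conclude the cardinality bound
  refine ⟨2 * M * C + 1, ?_⟩
  intro n
  have him : ∀ w ∈ arrowComponent T a n,
      f w ∈ Finset.Icc (f (a n) - M * C) (f (a n) + M * C) := by
    intro w hw
    have hd : T.dist (a n) w ≤ C := depth n w hw
    have := h1' (a n) w
    have h5 : M * T.dist (a n) w ≤ M * C := Nat.mul_le_mul_left _ hd
    have h6 : Nat.dist (f (a n)) (f w) = (f (a n) - f w) + (f w - f (a n)) := by
      simp [Nat.dist]
    rw [Finset.mem_Icc]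
    omega
  calc (arrowComponent T a n).encard
      = ((f : V → ℕ) '' arrowComponent T a n).encard :=
        (f.injective.encard_image _).symm
    _ ≤ ((Finset.Icc (f (a n) - M * C) (f (a n) + M * C) : Finset ℕ) : Set ℕ).encard := by
        refine Set.encard_mono ?_
        rintro x ⟨w, hw, rfl⟩
        simpa using him w hw
    _ = ((Finset.Icc (f (a n) - M * C) (f (a n) + M * C)).card : ℕ∞) :=
        Set.encard_coe_eq_coe_finsetCard _
    _ ≤ ((2 * M * C + 1 : ℕ) : ℕ∞) := by
        rw [Nat.cast_le, Nat.card_Icc]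
        have : 2 * M * C = M * C + M * C := by ring
        omega
end

section
/- Let T = (V,E) be an infinite tree (connected acyclic simple graph) with path metric d, let s be a natural number such that ρ(v) ≤ s for all v ∈ V, let (aₙ)ₙ∈ℕ be an arrow in T, and suppose there is a natural number t such that the connected component T(aₙ) of aₙ in the graph obtained from T by deleting all edges (aₖ, a_{k+1}), k ∈ ℕ, has at most t vertices, for every n ∈ ℕ. Then T is an asymptotic ray. -/
namespace AsymRayAux

open SimpleGraph

variable {V : Type*} {T : SimpleGraph V} {a : ℕ → V}

def IsArrow' {V : Type*} (G : SimpleGraph V) (a : ℕ → V) : Prop :=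
  Function.Injective a ∧ ∀ n : ℕ, G.Adj (a n) (a (n + 1)) ∧ G.dist (a 0) (a n) = n

/-- The deleted-edges graph. -/
def delG (T : SimpleGraph V) (a : ℕ → V) : SimpleGraph V :=
  T.deleteEdges {e : Sym2 V | ∃ k : ℕ, e = s(a k, a (k + 1))}

/-- A walk along the arrow from `a n` to `a (n+m)`. -/
def arrowWalk (h : ∀ n, T.Adj (a n) (a (n + 1))) : (m n : ℕ) → T.Walk (a n) (a (n + m))
  | 0, _ => Walk.nil
  | m + 1, n => (Walk.cons (h n) (arrowWalk h m (n + 1))).copy rfl (congrArg a (by omega))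

lemma arrowWalk_length (h : ∀ n, T.Adj (a n) (a (n + 1))) (m n : ℕ) :
    (arrowWalk h m n).length = m := by
  induction m generalizing n with
  | zero => simp [arrowWalk]
  | succ m ih => simp [arrowWalk, ih]

lemma arrowWalk_support (h : ∀ n, T.Adj (a n) (a (n + 1))) (m n : ℕ) :
    (arrowWalk h m n).support = (List.range (m + 1)).map (fun i => a (n + i)) := by
  induction m generalizing n with
  | zero => simp [arrowWalk, List.range_succ]
  | succ m ih =>
    rw [show m + 1 + 1 = (m + 1) + 1 from rfl, List.range_succ_eq_map]
    simp only [arrowWalk, Walk.support_copy, Walk.support_cons, ih, List.map_cons, List.map_map]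
    congr 1
    apply List.map_congr_left
    intro i _
    simp only [Function.comp]
    congr 1
    omega

lemma arrowWalk_isPath (hinj : Function.Injective a) (h : ∀ n, T.Adj (a n) (a (n + 1)))
    (m n : ℕ) : (arrowWalk h m n).IsPath := by
  rw [Walk.isPath_def, arrowWalk_support]
  refine List.Nodup.map ?_ List.nodup_range
  intro x y hxy
  have := hinj hxy
  omega

lemma arrowWalk_edge_mem (h : ∀ n, T.Adj (a n) (a (n + 1))) {m n : ℕ} (hm : 0 < m) :
    s(a n, a (n + 1)) ∈ (arrowWalk h m n).edges := by
  cases m with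
  | zero => omega
  | succ m => simp [arrowWalk]

lemma dist_arrow (hT : T.Connected) (ha : IsArrow' T a) (n m : ℕ) :
    T.dist (a n) (a (n + m)) = m := by
  have h1 : T.dist (a n) (a (n + m)) ≤ m := by
    have := SimpleGraph.dist_le (arrowWalk (fun k => (ha.2 k).1) m n)
    rwa [arrowWalk_length] at this
  have h0n := (ha.2 n).2
  have h0nm := (ha.2 (n + m)).2
  have htri := hT.dist_triangle (u := a 0) (v := a n) (w := a (n + m))
  omega

lemma dist_arrow_nat (hT : T.Connected) (ha : IsArrow' T a) (n k : ℕ) :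
    T.dist (a n) (a k) = Nat.dist n k := by
  rcases le_total n k with h | h
  · rw [show k = n + (k - n) by omega, dist_arrow hT ha, Nat.dist]
    omega
  · rw [SimpleGraph.dist_comm, show n = k + (n - k) by omega, dist_arrow hT ha, Nat.dist]
    omega


lemma comp_cover (hT : T.Connected) (v : V) :
    ∃ n, (delG T a).Reachable (a n) v := by
  obtain ⟨p⟩ := hT.preconnected (a 0) v
  suffices H : ∀ (u w : V), T.Walk u w → ∀ n, (delG T a).Reachable (a n) u →
      ∃ m, (delG T a).Reachable (a m) w from H _ _ p 0 (Reachable.refl _)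
  intro u w p
  induction p with
  | nil => exact fun n h => ⟨n, h⟩
  | @cons x y z hxy q ih =>
    intro n hx
    by_cases he : s(x, y) ∈ {e : Sym2 V | ∃ k : ℕ, e = s(a k, a (k + 1))}
    · obtain ⟨k, hk⟩ := he
      rw [Sym2.eq_iff] at hk
      rcases hk with ⟨_, hy⟩ | ⟨_, hy⟩
      · subst hy; exact ih (k + 1) (Reachable.refl _)
      · subst hy; exact ih k (Reachable.refl _)
    · have hadj : (delG T a).Adj x y := by
        rw [delG, deleteEdges_adj]; exact ⟨hxy, he⟩
      exact ih n (hx.trans hadj.reachable)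

lemma not_reachable_delG (hT : T.IsTree) (ha : IsArrow' T a) {n k : ℕ} (hlt : n < k) :
    ¬ (delG T a).Reachable (a n) (a k) := by
  classical
  intro hreach
  obtain ⟨q0⟩ := hreach
  let qp := q0.toPath
  have hsub : ∀ e ∈ (qp : (delG T a).Walk (a n) (a k)).edges, e ∈ T.edgeSet := by
    intro e he
    have h1 := Walk.edges_subset_edgeSet _ he
    rw [delG, edgeSet_deleteEdges] at h1
    exact h1.1
  have hnotmem : ∀ e ∈ (qp : (delG T a).Walk (a n) (a k)).edges,
      e ∉ {e : Sym2 V | ∃ k : ℕ, e = s(a k, a (k + 1))} := by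
    intro e he
    have h1 := Walk.edges_subset_edgeSet _ he
    rw [delG, edgeSet_deleteEdges] at h1
    exact h1.2
  let p2 : T.Walk (a n) (a k) := (qp : (delG T a).Walk (a n) (a k)).transfer T hsub
  have hp2 : p2.IsPath := by
    rw [Walk.isPath_def]
    show ((qp : (delG T a).Walk (a n) (a k)).transfer T hsub).support.Nodup
    rw [Walk.support_transfer]
    exact qp.2.support_nodup
  let p1 : T.Walk (a n) (a k) :=
    (arrowWalk (fun j => (ha.2 j).1) (k - n) n).copy rfl (congrArg a (by omega))
  have hp1 : p1.IsPath := by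
    show ((arrowWalk _ (k - n) n).copy rfl _).IsPath
    rw [Walk.isPath_def, Walk.support_copy, ← Walk.isPath_def]
    exact arrowWalk_isPath ha.1 _ _ _
  have huniq := hT.IsAcyclic.path_unique ⟨p1, hp1⟩ ⟨p2, hp2⟩
  have hwalkeq : p1 = p2 := Subtype.ext_iff.mp huniq
  have hedge : s(a n, a (n + 1)) ∈ p1.edges := by
    show s(a n, a (n + 1)) ∈ ((arrowWalk _ (k - n) n).copy rfl _).edges
    rw [Walk.edges_copy]
    exact arrowWalk_edge_mem _ (by omega)
  rw [hwalkeq] at hedge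
  have : s(a n, a (n + 1)) ∈ (qp : (delG T a).Walk (a n) (a k)).edges := by
    rwa [show p2.edges = (qp : (delG T a).Walk (a n) (a k)).edges from Walk.edges_transfer _ _]
      at hedge
  exact hnotmem _ this ⟨n, rfl⟩

lemma comp_disjoint (hT : T.IsTree) (ha : IsArrow' T a) {n k : ℕ} {v : V}
    (hn : (delG T a).Reachable (a n) v) (hk : (delG T a).Reachable (a k) v) : n = k := by
  rcases lt_trichotomy n k with h | h | h
  · exact absurd (hn.trans hk.symm) (not_reachable_delG hT ha h)
  · exact h
  · exact absurd (hk.trans hn.symm) (not_reachable_delG hT ha h)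

lemma comp_dist {n : ℕ} {v : V} (hv : (delG T a).Reachable (a n) v)
    (hfin : {w | (delG T a).Reachable (a n) w}.Finite) :
    T.dist (a n) v + 1 ≤ {w | (delG T a).Reachable (a n) w}.ncard := by
  classical
  obtain ⟨q0⟩ := hv
  let qp := q0.toPath
  have hsupp : ∀ x ∈ (qp : (delG T a).Walk (a n) v).support,
      x ∈ {w | (delG T a).Reachable (a n) w} := by
    intro x hx
    exact ⟨(qp : (delG T a).Walk (a n) v).takeUntil x hx⟩
  have hnodup := qp.2.support_nodup
  have hcard : (qp : (delG T a).Walk (a n) v).support.length ≤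
      {w | (delG T a).Reachable (a n) w}.ncard := by
    rw [← List.toFinset_card_of_nodup hnodup, ← Set.ncard_coe_finset]
    refine Set.ncard_le_ncard ?_ hfin
    intro x hx
    simp only [Finset.coe_sort_coe, List.mem_toFinset, Finset.mem_coe] at hx
    exact hsupp x hx
  have hlen := Walk.length_support (qp : (delG T a).Walk (a n) v)
  have h1 : (delG T a).dist (a n) v ≤ (qp : (delG T a).Walk (a n) v).length :=
    SimpleGraph.dist_le _
  have h2 : T.dist (a n) v ≤ (delG T a).dist (a n) v :=
    Reachable.dist_anti (T.deleteEdges_le _) ⟨q0⟩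
  omega

end AsymRayAux
open AsymRayAux in
/-- If `T` is an infinite tree with degrees bounded by `s`, `(aₙ)` is an
arrow in `T`, and the components `T(aₙ)` obtained by deleting the arrow's edges have at
most `t` vertices each, then `T` is an asymptotic ray. -/
theorem tree_asymptoticRay_of_components_bounded {V : Type*} [Infinite V]
    (T : SimpleGraph V) (hT : T.IsTree) (s : ℕ)
    (hdeg : ∀ v : V, (T.neighborSet v).encard ≤ (s : ℕ∞))
    (a : ℕ → V) (ha : IsArrow T a) (t : ℕ)
    (hcomp : ∀ n : ℕ, (arrowComponent T a n).encard ≤ (t : ℕ∞)) :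
    IsAsymptoticRay T := by
  classical
  have ha' : AsymRayAux.IsArrow' T a := ha
  have hconn : T.Connected := hT.isConnected
  set C : ℕ → Set V := fun n => {w | (delG T a).Reachable (a n) w} with hCdef
  have hcomp' : ∀ n, (C n).encard ≤ (t : ℕ∞) := fun n => hcomp n
  have hfin : ∀ n, (C n).Finite := fun n => Set.finite_of_encard_le_coe (hcomp' n)
  have hncard : ∀ n, (C n).ncard ≤ t := fun n =>
    (Set.encard_le_coe_iff_finite_ncard_le.mp (hcomp' n)).2
  have hmemA : ∀ n, a n ∈ C n := fun n => SimpleGraph.Reachable.refl _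
  have hcover : ∀ v : V, ∃ n, v ∈ C n := fun v => comp_cover hconn v
  have hdisj : ∀ {n k : ℕ} {v : V}, v ∈ C n → v ∈ C k → n = k :=
    fun hn hk => comp_disjoint hT ha' hn hk
  choose c hc using hcover
  have hceq : ∀ {v : V} {n : ℕ}, v ∈ C n → c v = n := fun h => hdisj (hc _) h
  set sz : ℕ → ℕ := fun n => (C n).ncard with hszdef
  have hsz1 : ∀ n, 1 ≤ sz n := fun n => (Set.ncard_pos (hfin n)).mpr ⟨a n, hmemA n⟩
  have hszt : ∀ n, sz n ≤ t := hncard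
  have ht1 : 1 ≤ t := le_trans (hsz1 0) (hszt 0)
  set S : ℕ → ℕ := fun n => ∑ k ∈ Finset.range n, sz k with hSdef
  have hS0 : S 0 = 0 := Finset.sum_range_zero _
  have hSsucc : ∀ n, S (n + 1) = S n + sz n := fun n => Finset.sum_range_succ _ n
  have hSlow : ∀ n m, S n + m ≤ S (n + m) := by
    intro n m
    induction m with
    | zero => simp
    | succ m ih =>
      have h1 := hSsucc (n + m)
      have h2 := hsz1 (n + m)
      rw [show n + (m + 1) = (n + m) + 1 by omega]
      omega
  have hSup : ∀ n m, S (n + m) ≤ S n + m * t := by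
    intro n m
    induction m with
    | zero => simp
    | succ m ih =>
      have h1 := hSsucc (n + m)
      have h2 := hszt (n + m)
      rw [show n + (m + 1) = (n + m) + 1 by omega, Nat.succ_mul]
      omega
  have hSmono : ∀ {n k : ℕ}, n ≤ k → S n ≤ S k := by
    intro n k h
    have := hSlow n (k - n)
    rw [show n + (k - n) = k by omega] at this
    omega
  have hfinty : ∀ n, Finite (C n) := fun n => (hfin n).to_subtype
  let En : (n : ℕ) → C n ≃ Fin (sz n) := fun n =>
    @Finite.equivFinOfCardEq _ (hfinty n) _ (Nat.card_coe_set_eq _)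
  let rk : V → ℕ := fun v => (En (c v) ⟨v, hc v⟩ : Fin (sz (c v))).val
  have hrk_lt : ∀ v, rk v < sz (c v) := fun v => (En (c v) ⟨v, hc v⟩).isLt
  have hrk_eq : ∀ (n : ℕ) (v : V) (h : v ∈ C n), rk v = (En n ⟨v, h⟩ : Fin (sz n)).val := by
    intro n v h
    have hcv : c v = n := hceq h
    subst hcv
    rfl
  set f : V → ℕ := fun v => S (c v) + rk v with hfdef
  have hflb : ∀ v, S (c v) ≤ f v := fun v => Nat.le_add_right _ _
  have hfub : ∀ v, f v < S (c v + 1) := by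
    intro v
    have h1 := hrk_lt v
    have h2 := hSsucc (c v)
    show S (c v) + rk v < S (c v + 1)
    omega
  have hfinj : Function.Injective f := by
    intro u v huv
    have huv' : S (c u) + rk u = S (c v) + rk v := huv
    rcases lt_trichotomy (c u) (c v) with h | h | h
    · exfalso
      have h1 := hfub u
      have h2 := hflb v
      have h3 : S (c u + 1) ≤ S (c v) := hSmono (by omega)
      omega
    · have hvmem : v ∈ C (c u) := h ▸ hc v
      have h1 : rk u = rk v := by
        have := hSsucc (c u)
        rw [h] at huv'
        omega
      have h2 := hrk_eq (c u) u (hc u)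
      have h3 := hrk_eq (c u) v hvmem
      have h4 : En (c u) ⟨u, hc u⟩ = En (c u) ⟨v, hvmem⟩ := Fin.ext (by omega)
      exact congrArg Subtype.val ((En (c u)).injective h4)
    · exfalso
      have h1 := hfub v
      have h2 := hflb u
      have h3 : S (c v + 1) ≤ S (c u) := hSmono (by omega)
      omega
  have hfsurj : Function.Surjective f := by
    intro i
    have hex : ∃ n, i < S (n + 1) := by
      refine ⟨i, ?_⟩
      have := hSlow 0 (i + 1)
      rw [Nat.zero_add] at this
      omega
    obtain ⟨n, hn1, hn2⟩ : ∃ n, S n ≤ i ∧ i < S (n + 1) := by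
      refine ⟨Nat.find hex, ?_, Nat.find_spec hex⟩
      rcases Nat.eq_zero_or_pos (Nat.find hex) with h0 | h0
      · rw [h0, hS0]; exact Nat.zero_le i
      · have hmin := Nat.find_min hex (Nat.sub_lt h0 Nat.one_pos)
        rw [Nat.sub_add_cancel h0] at hmin
        omega
    have hr : i - S n < sz n := by have := hSsucc n; omega
    refine ⟨((En n).symm ⟨i - S n, hr⟩ : C n), ?_⟩
    set v : C n := (En n).symm ⟨i - S n, hr⟩ with hvdef
    have hvC : (v : V) ∈ C n := v.2
    have hcv : c (v : V) = n := hceq hvC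
    have h1 : rk (v : V) = i - S n := by
      rw [hrk_eq n v hvC]
      have h2 : (⟨(v : V), hvC⟩ : C n) = v := Subtype.ext rfl
      rw [h2, hvdef, Equiv.apply_symm_apply]
    show S (c (v : V)) + rk (v : V) = i
    rw [hcv, h1]
    omega
  let e : V ≃ ℕ := Equiv.ofBijective f ⟨hfinj, hfsurj⟩
  have hanchor : ∀ v : V, T.dist (a (c v)) v + 1 ≤ t := by
    intro v
    have h1 : T.dist (a (c v)) v + 1 ≤ (C (c v)).ncard := comp_dist (hc v) (hfin (c v))
    have h2 := hncard (c v)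
    omega
  have hdistA : ∀ u v : V, T.dist (a (c u)) (a (c v)) = Nat.dist (c u) (c v) :=
    fun u v => dist_arrow_nat hconn ha' _ _
  refine ⟨e, (2 * t + 1) * t, 3 * t, ?_, ?_⟩
  · intro u v
    show Nat.dist (f u) (f v) ≤ (2 * t + 1) * t * T.dist u v
    by_cases huv : u = v
    · subst huv; simp [Nat.dist_self]
    have hd1 : 1 ≤ T.dist u v := hconn.pos_dist_of_ne huv
    have htri1 := hconn.dist_triangle (u := a (c u)) (v := u) (w := a (c v))
    have htri2 := hconn.dist_triangle (u := u) (v := v) (w := a (c v))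
    have hA := hanchor u
    have hB := hanchor v
    have hcomm1 : T.dist v (a (c v)) = T.dist (a (c v)) v := SimpleGraph.dist_comm ..
    have hcomm2 : T.dist (a (c u)) u = T.dist u (a (c u)) := SimpleGraph.dist_comm ..
    have hAB := hdistA u v
    have hdk : Nat.dist (c u) (c v) + 2 ≤ T.dist u v + 2 * t := by omega
    have h1 := hflb u; have h2 := hfub u; have h3 := hflb v; have h4 := hfub v
    have hblock : Nat.dist (f u) (f v) ≤ (Nat.dist (c u) (c v) + 1) * t := by
      rcases le_total (c u) (c v) with h | h
      · have h5 : S (c u + 1) ≤ S (c v + 1) := hSmono (by omega)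
        have h7 : S (c u) ≤ S (c v) := hSmono h
        have h6 := hSup (c u) (c v + 1 - c u)
        rw [show c u + (c v + 1 - c u) = c v + 1 by omega] at h6
        rw [show (Nat.dist (c u) (c v) + 1) = c v + 1 - c u by
          rw [Nat.dist_eq_sub_of_le h]; omega]
        have hNd : Nat.dist (f u) (f v) = f u - f v + (f v - f u) := rfl
        omega
      · have h5 : S (c v + 1) ≤ S (c u + 1) := hSmono (by omega)
        have h7 : S (c v) ≤ S (c u) := hSmono h
        have h6 := hSup (c v) (c u + 1 - c v)
        rw [show c v + (c u + 1 - c v) = c u + 1 by omega] at h6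
        rw [show (Nat.dist (c u) (c v) + 1) = c u + 1 - c v by
          rw [Nat.dist_eq_sub_of_le_right h]; omega]
        have hNd : Nat.dist (f u) (f v) = f u - f v + (f v - f u) := rfl
        omega
    have h2t : 2 * t ≤ 2 * t * T.dist u v := Nat.le_mul_of_pos_right _ hd1
    have hexp : (2 * t + 1) * T.dist u v = 2 * t * T.dist u v + T.dist u v := by ring
    have hstep : Nat.dist (c u) (c v) + 1 ≤ (2 * t + 1) * T.dist u v := by omega
    calc Nat.dist (f u) (f v) ≤ (Nat.dist (c u) (c v) + 1) * t := hblock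
      _ ≤ ((2 * t + 1) * T.dist u v) * t := Nat.mul_le_mul_right t hstep
      _ = (2 * t + 1) * t * T.dist u v := by ring
  · intro i j
    show T.dist (e.symm i) (e.symm j) ≤ 3 * t * Nat.dist i j
    by_cases hij : i = j
    · subst hij
      simp [SimpleGraph.dist_self]
    set u : V := e.symm i with hu
    set v : V := e.symm j with hv2
    have hfu : f u = i := e.apply_symm_apply i
    have hfv : f v = j := e.apply_symm_apply j
    have hd1 : 1 ≤ Nat.dist i j := Nat.dist_pos_of_ne hij
    have h1 := hflb u; have h2 := hfub u; have h3 := hflb v; have h4 := hfub v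
    rw [hfu] at h1 h2; rw [hfv] at h3 h4
    have hNdij : Nat.dist i j = i - j + (j - i) := rfl
    have hkey : Nat.dist (c u) (c v) ≤ Nat.dist i j := by
      rcases lt_trichotomy (c u) (c v) with h | h | h
      · have h5 := hSlow (c u + 1) (c v - (c u + 1))
        rw [show c u + 1 + (c v - (c u + 1)) = c v by omega] at h5
        rw [Nat.dist_eq_sub_of_le (by omega : c u ≤ c v)]
        omega
      · rw [h, Nat.dist_self]; exact Nat.zero_le _
      · have h5 := hSlow (c v + 1) (c u - (c v + 1))
        rw [show c v + 1 + (c u - (c v + 1)) = c u by omega] at h5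
        rw [Nat.dist_eq_sub_of_le_right (by omega : c v ≤ c u)]
        omega
    have htri1 := hconn.dist_triangle (u := u) (v := a (c u)) (w := v)
    have htri2 := hconn.dist_triangle (u := a (c u)) (v := a (c v)) (w := v)
    have hA := hanchor u
    have hB := hanchor v
    have hcomm1 : T.dist u (a (c u)) = T.dist (a (c u)) u := SimpleGraph.dist_comm ..
    have hAB := hdistA u v
    have hd : T.dist u v + 2 ≤ 2 * t + Nat.dist (c u) (c v) := by omega
    have h2t : 2 * t ≤ 2 * t * Nat.dist i j := Nat.le_mul_of_pos_right _ hd1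
    have hexp : (2 * t + 1) * Nat.dist i j = 2 * t * Nat.dist i j + Nat.dist i j := by ring
    have hle : (2 * t + 1) * Nat.dist i j ≤ 3 * t * Nat.dist i j :=
      Nat.mul_le_mul_right _ (by omega)
    omega
end

section
/- Let T = (V,E) be a tree (connected acyclic simple graph) with path metric d, let (aₙ)ₙ∈ℕ be an arrow in T with A = {aₙ : n ∈ ℕ}, and suppose there is a natural number r such that V = B(A,r). Then for every n ∈ ℕ, the connected component T(aₙ) of aₙ in the graph obtained from T by deleting all edges (aₖ, a_{k+1}), k ∈ ℕ, satisfies V(T(aₙ)) ⊆ B(aₙ, r). -/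
/-- Walking along the arrow from `a m₁` to `a m₂` (with `m₁ ≤ m₂`) avoids the single
deleted edge `s(a j, a (j+1))`, provided no index `k` with `m₁ ≤ k < m₂` equals `j`. -/
lemma arrow_reach_avoid {V : Type*} {T : SimpleGraph V} {a : ℕ → V} (ha : IsArrow T a)
    (j : ℕ) {m₁ m₂ : ℕ} (h : m₁ ≤ m₂) (hk : ∀ k, m₁ ≤ k → k < m₂ → k ≠ j) :
    (T.deleteEdges {s(a j, a (j + 1))}).Reachable (a m₁) (a m₂) := by
  obtain ⟨hinj, hstep⟩ := ha
  induction m₂ with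
  | zero =>
    simp only [Nat.le_zero] at h
    subst h; exact SimpleGraph.Reachable.refl _
  | succ m ih =>
    rcases Nat.lt_or_ge m₁ (m + 1) with hlt | hge
    · have hm₁m : m₁ ≤ m := Nat.lt_succ_iff.mp hlt
      have hreach : (T.deleteEdges {s(a j, a (j + 1))}).Reachable (a m₁) (a m) :=
        ih hm₁m (fun k hk1 hk2 => hk k hk1 (Nat.lt_succ_of_lt hk2))
      refine hreach.trans (SimpleGraph.Adj.reachable ?_)
      rw [SimpleGraph.deleteEdges_adj]
      refine ⟨(hstep m).1, ?_⟩
      simp only [Set.mem_singleton_iff, Sym2.eq, Sym2.rel_iff', Prod.mk.injEq, Prod.swap_prod_mk]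
      have hmj : m ≠ j := hk m hm₁m (Nat.lt_succ_self m)
      rintro (⟨h1, _⟩ | ⟨h1, h2⟩)
      · exact hmj (hinj h1)
      · have := hinj h1
        have := hinj h2
        omega
    · have : m₁ = m + 1 := le_antisymm h hge
      subst this; exact SimpleGraph.Reachable.refl _

/-- Key lemma: if `v` lies in the component of `a n` after deleting the arrow edges,
then `a n` is the closest arrow vertex to `v`. -/
lemma dist_arrow_min {V : Type*} {T : SimpleGraph V} (hT : T.IsTree) {a : ℕ → V}
    (ha : IsArrow T a) {n : ℕ} {v : V} (hv : v ∈ arrowComponent T a n) (m : ℕ) :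
    T.dist v (a n) ≤ T.dist v (a m) := by
  classical
  rcases eq_or_ne m n with rfl | hmn
  · exact le_rfl
  have hbridge : ∀ ⦃x y : V⦄, T.Adj x y → T.IsBridge s(x, y) :=
    SimpleGraph.isAcyclic_iff_forall_adj_isBridge.mp hT.IsAcyclic
  obtain ⟨p, hp⟩ := (hT.isConnected v (a m)).exists_walk_length_eq_dist
  obtain ⟨j, hside⟩ :
      ∃ j : ℕ,
        (j = n ∧ (T.deleteEdges {s(a j, a (j + 1))}).Reachable (a m) (a (j + 1))) ∨
        (j + 1 = n ∧ (T.deleteEdges {s(a j, a (j + 1))}).Reachable (a m) (a j)) := by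
    rcases Nat.lt_or_ge n m with hlt | hge
    · exact ⟨n, Or.inl ⟨rfl,
        (arrow_reach_avoid ha n (by omega) (fun k hk1 hk2 => by omega)).symm⟩⟩
    · have hmn' : m < n := lt_of_le_of_ne hge hmn
      refine ⟨n - 1, Or.inr ⟨by omega, ?_⟩⟩
      exact arrow_reach_avoid ha (n - 1) (by omega) (fun k hk1 hk2 => by omega)
  set e : Sym2 V := s(a j, a (j + 1)) with he
  have hjset : e ∈ {e : Sym2 V | ∃ k : ℕ, e = s(a k, a (k + 1))} := ⟨j, rfl⟩
  have hvreach : (T.deleteEdges {e}).Reachable (a n) v :=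
    hv.mono (SimpleGraph.deleteEdges_anti (Set.singleton_subset_iff.mpr hjset))
  have hadj : T.Adj (a j) (a (j + 1)) := (ha.2 j).1
  have hnb : ¬ (T \ SimpleGraph.fromEdgeSet {e}).Reachable (a j) (a (j + 1)) :=
    SimpleGraph.isBridge_iff.mp (hbridge hadj)
  have hemem : e ∈ p.edges := by
    by_contra hne
    have hwalk : (T.deleteEdges {e}).Reachable v (a m) :=
      ⟨p.toDeleteEdges {e} (fun f hf => by
        simp only [Set.mem_singleton_iff]
        exact fun h => hne (h ▸ hf))⟩
    refine hnb ?_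
    rcases hside with ⟨hj, hreachm⟩ | ⟨hj, hreachm⟩
    · subst hj
      exact (hvreach.trans hwalk).trans hreachm
    · subst hj
      exact ((hvreach.trans hwalk).trans hreachm).symm
  have hsupp : a n ∈ p.support := by
    rcases hside with ⟨hj, _⟩ | ⟨hj, _⟩
    · subst hj; exact p.fst_mem_support_of_mem_edges hemem
    · subst hj; exact p.snd_mem_support_of_mem_edges hemem
  calc T.dist v (a n) ≤ (p.takeUntil (a n) hsupp).length := SimpleGraph.dist_le _
    _ ≤ p.length := SimpleGraph.Walk.length_takeUntil_le p hsupp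
    _ = T.dist v (a m) := hp

/-- If `T` is a tree with an arrow `(aₙ)` and `V = B(A, r)` for
`A = {aₙ : n ∈ ℕ}`, then each component `T(aₙ)` obtained by deleting the arrow's edges is
contained in the ball `B(aₙ, r)`. -/
theorem tree_component_subset_ball {V : Type*} (T : SimpleGraph V) (hT : T.IsTree)
    (a : ℕ → V) (ha : IsArrow T a) (r : ℕ)
    (hr : ∀ v : V, ∃ n : ℕ, T.dist v (a n) ≤ r) :
    ∀ n : ℕ, arrowComponent T a n ⊆ {u : V | T.dist u (a n) ≤ r} := by
  intro n v hv
  obtain ⟨m, hm⟩ := hr v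
  exact le_trans (dist_arrow_min hT ha hv m) hm
end
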